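/- arXiv:2008.12660 — 4 statements merged into one kernel-verified Lean document; each statement's English description precedes it below -/
import Mathlib

section
/- Let $0<\alpha<n$ and let $\Omega$ be homogeneous of degree zero with $\Omega\in L^{n/(n-\alpha)}(\mathbb{S}^{n-1})$. Then the fractional integral operator $T_{|\Omega|}^{\alpha}f(x)=\int_{\mathbb{R}^n}\frac{|\Omega(x-y)|}{|x-y|^{n-\alpha}}|f(y)|\,dy$ is bounded from $L^1(\mathbb{R}^n)$ to weak $L^{n/(n-\alpha)}(\mathbb{R}^n)$, with operator norm bounded by a constant (depending only on $n,\alpha$) times $\|\Omega\|_{L^{n/(n-\alpha)}(\mathbb{S}^{n-1})}$. -/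
open MeasureTheory Metric Set ENNReal Filter

noncomputable section

abbrev Eucl (n : ℕ) := EuclideanSpace ℝ (Fin n)

/-- `Ω` is homogeneous of degree zero. -/
def Homog (n : ℕ) (Ω : Eucl n → ℝ) : Prop :=
  ∀ r : ℝ, 0 < r → ∀ x : Eucl n, x ≠ 0 → Ω (r • x) = Ω x

/-- Restricted weak `L^q` quasinorm of an `ℝ≥0∞`-valued function on the set `A`. -/
noncomputable def wnormSet {X : Type*} [MeasurableSpace X] (μ : Measure X) (q : ℝ)
    (A : Set X) (g : X → ℝ≥0∞) : ℝ≥0∞ :=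
  ⨆ l : NNReal, (l : ℝ≥0∞) * (μ {x | x ∈ A ∧ (l : ℝ≥0∞) < g x}) ^ (1 / q)

/-- `∫_{S^{n-1}} |Ω|^q dσ`. -/
noncomputable def sphereLpPow (n : ℕ) (q : ℝ) (Ω : Eucl n → ℝ) : ℝ≥0∞ :=
  ∫⁻ x : Metric.sphere (0 : Eucl n) 1, (‖Ω (x : Eucl n)‖₊ : ℝ≥0∞) ^ q
    ∂((volume : Measure (Eucl n)).toSphere)

/-- `‖Ω‖_{L^q(S^{n-1})}`. -/
noncomputable def sphereLpNorm (n : ℕ) (q : ℝ) (Ω : Eucl n → ℝ) : ℝ≥0∞ :=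
  (sphereLpPow n q Ω) ^ (1 / q)

/-- Rough fractional maximal operator. -/
noncomputable def fracMax (n : ℕ) (α : ℝ) (Ω f : Eucl n → ℝ) (x : Eucl n) : ℝ≥0∞ :=
  ⨆ (r : ℝ) (_ : 0 < r), ENNReal.ofReal (r ^ (α - n)) *
    ∫⁻ y in ball x r, (‖Ω (x - y)‖₊ * ‖f y‖₊ : ℝ≥0∞)

/-- Fractional integral with kernel `|Ω|`, applied to `|f|`. -/
noncomputable def fracIntAbs (n : ℕ) (α : ℝ) (Ω f : Eucl n → ℝ) (x : Eucl n) : ℝ≥0∞ :=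
  ∫⁻ y, ((‖Ω (x - y)‖₊ * ‖f y‖₊ : ℝ≥0∞)) / (‖x - y‖₊ : ℝ≥0∞) ^ ((n : ℝ) - α)

/-- Signed fractional integral. -/
noncomputable def fracInt (n : ℕ) (α : ℝ) (Ω f : Eucl n → ℝ) (x : Eucl n) : ℝ :=
  ∫ y, (Ω (x - y) / ‖x - y‖ ^ ((n : ℝ) - α)) * f y

/-- The `L^1`-normalized dilation `f_t(y) = t^{-n} f(y/t)`. -/
noncomputable def dil (n : ℕ) (t : ℝ) (f : Eucl n → ℝ) : Eucl n → ℝ :=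
  fun y => (t ^ n)⁻¹ * f (t⁻¹ • y)


open scoped Interval

open intervalIntegral in
lemma my_integral_rpow {a b r : ℝ} (h : -1 < r ∨ r ≠ -1 ∧ (0 : ℝ) ∉ [[a, b]]) :
    ∫ x in a..b, x ^ r = (b ^ (r + 1) - a ^ (r + 1)) / (r + 1) := integral_rpow h
open intervalIntegral in
lemma my_intervalIntegrable_rpow' {a b r : ℝ} (h : -1 < r) :
    IntervalIntegrable (fun x => x ^ r) volume a b := intervalIntegrable_rpow' h



lemma lint_vIP (m : ℕ) (g : ℝ → ℝ≥0∞) :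
    ∫⁻ r : Ioi (0:ℝ), g r ∂(MeasureTheory.Measure.volumeIoiPow m)
      = ∫⁻ r in Ioi (0:ℝ), ENNReal.ofReal (r ^ m) * g r := by
  rw [MeasureTheory.Measure.volumeIoiPow,
    lintegral_withDensity_eq_lintegral_mul_non_measurable _
      (by exact (measurable_subtype_coe.pow_const m).ennreal_ofReal)
      (Filter.Eventually.of_forall fun x => ENNReal.ofReal_lt_top)]
  exact lintegral_subtype_comap measurableSet_Ioi (fun r => ENNReal.ofReal (r ^ m) * g r)

lemma lint_rpow_Ioo (β ρ : ℝ) (hβ : 0 < β) (hρ : 0 ≤ ρ) :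
    ∫⁻ r in Ioo (0:ℝ) ρ, ENNReal.ofReal (r ^ (β - 1)) = ENNReal.ofReal (ρ ^ β / β) := by
  have hint : IntegrableOn (fun r : ℝ => r ^ (β - 1)) (Ioo 0 ρ) volume := by
    have := (my_intervalIntegrable_rpow' (a := 0) (b := ρ)
      (by linarith : (-1:ℝ) < β - 1)).1
    exact this.mono_set Ioo_subset_Ioc_self
  rw [← MeasureTheory.ofReal_integral_eq_lintegral_ofReal hint ?_]
  · congr 1
    rw [← integral_Ioc_eq_integral_Ioo, ← intervalIntegral.integral_of_le hρ,
      my_integral_rpow (Or.inl (by linarith))]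
    rw [Real.zero_rpow (by linarith : β - 1 + 1 ≠ 0)]
    ring_nf
  · filter_upwards [ae_restrict_mem measurableSet_Ioo] with r hr
    exact Real.rpow_nonneg hr.1.le _

lemma lint_ind (m : ℕ) (h : ℝ → ℝ≥0∞) (ρ : ℝ) :
    (∫⁻ r in Ioi (0:ℝ), ENNReal.ofReal (r ^ m) * (Iio ρ).indicator h r)
      = ∫⁻ r in Ioo (0:ℝ) ρ, ENNReal.ofReal (r ^ m) * h r := by
  have : ∀ r : ℝ, ENNReal.ofReal (r ^ m) * (Iio ρ).indicator h r
      = (Iio ρ).indicator (fun r => ENNReal.ofReal (r ^ m) * h r) r := by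
    intro r
    by_cases hr : r ∈ Iio ρ <;> simp [indicator_of_mem, indicator_of_notMem, hr]
  simp_rw [this]
  rw [lintegral_indicator measurableSet_Iio, Measure.restrict_restrict measurableSet_Iio,
    Set.Iio_inter_Ioi]


lemma polar_lintegral {n : ℕ} (hn : n ≠ 0) (g : Eucl n → ℝ≥0∞) (hg : Measurable g) :
    ∫⁻ z, g z = ∫⁻ θ : sphere (0 : Eucl n) 1, ∫⁻ r : Ioi (0:ℝ),
      g ((r : ℝ) • (θ : Eucl n)) ∂(MeasureTheory.Measure.volumeIoiPow (n - 1))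
      ∂((volume : Measure (Eucl n)).toSphere) := by
  haveI : Nontrivial (Eucl n) := by
    refine nontrivial_of_ne (EuclideanSpace.single ⟨0, Nat.pos_of_ne_zero hn⟩ 1) 0 ?_
    intro h
    have := congrArg (fun v => v ⟨0, Nat.pos_of_ne_zero hn⟩) h
    simp [EuclideanSpace.single_apply] at this
  have hdim : Module.finrank ℝ (Eucl n) = n := finrank_euclideanSpace_fin
  set μ := (volume : Measure (Eucl n))
  have hG : Measurable (fun p : sphere (0 : Eucl n) 1 × Ioi (0:ℝ) =>
      g ((p.2 : ℝ) • (p.1 : Eucl n))) := by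
    apply hg.comp
    exact ((continuous_subtype_val.comp continuous_snd).smul
      (continuous_subtype_val.comp continuous_fst)).measurable
  have h2 := (μ.measurePreserving_homeomorphUnitSphereProd).lintegral_comp hG
  rw [hdim] at h2
  have h3 : ∀ x : ({0}ᶜ : Set (Eucl n)),
      g (((homeomorphUnitSphereProd (Eucl n) x).2 : ℝ) •
        ((homeomorphUnitSphereProd (Eucl n) x).1 : Eucl n)) = g x := by
    intro x
    congr 1
    simp only [homeomorphUnitSphereProd_apply_snd_coe, homeomorphUnitSphereProd_apply_fst_coe]
    exact smul_inv_smul₀ (norm_ne_zero_iff.2 x.2) _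
  calc ∫⁻ z, g z ∂μ = ∫⁻ z in ({0}ᶜ : Set (Eucl n)), g z ∂μ := by
        rw [MeasureTheory.restrict_compl_singleton]
    _ = ∫⁻ x : ({0}ᶜ : Set (Eucl n)), g x ∂(μ.comap (↑)) :=
        (lintegral_subtype_comap (measurableSet_singleton (0:Eucl n)).compl g).symm
    _ = ∫⁻ x : ({0}ᶜ : Set (Eucl n)),
        g (((homeomorphUnitSphereProd (Eucl n) x).2 : ℝ) •
        ((homeomorphUnitSphereProd (Eucl n) x).1 : Eucl n)) ∂(μ.comap (↑)) := by
        exact (lintegral_congr h3).symm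
    _ = ∫⁻ p : sphere (0 : Eucl n) 1 × Ioi (0:ℝ), g ((p.2 : ℝ) • (p.1 : Eucl n))
        ∂(μ.toSphere.prod (.volumeIoiPow (n - 1))) := h2
    _ = _ := by
        rw [MeasureTheory.lintegral_prod _ hG.aemeasurable]


section Ker
variable {n : ℕ} {α : ℝ} (Ω : Eucl n → ℝ)

/-- the kernel -/
def Ker (n : ℕ) (α : ℝ) (Ω : Eucl n → ℝ) (z : Eucl n) : ℝ≥0∞ :=
  (‖Ω z‖₊ : ℝ≥0∞) / (‖z‖₊ : ℝ≥0∞) ^ ((n : ℝ) - α)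

lemma ker_meas (hΩ : Measurable Ω) : Measurable (Ker n α Ω) := by
  apply Measurable.div
  · exact hΩ.nnnorm.coe_nnreal_ennreal
  · exact (measurable_nnnorm.coe_nnreal_ennreal).pow_const _

lemma ker_smul (hΩ : Homog n Ω) (θ : sphere (0 : Eucl n) 1) {r : ℝ} (hr : 0 < r) :
    Ker n α Ω (r • (θ : Eucl n)) =
      (‖Ω (θ : Eucl n)‖₊ : ℝ≥0∞) / ENNReal.ofReal (r ^ ((n:ℝ) - α)) := by
  have hθ : (θ : Eucl n) ≠ 0 := ne_of_mem_sphere θ.2 one_ne_zero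
  have h1 : Ω (r • (θ : Eucl n)) = Ω (θ : Eucl n) := hΩ r hr _ hθ
  have h2 : (‖r • (θ : Eucl n)‖₊ : ℝ≥0∞) = ENNReal.ofReal r := by
    rw [← enorm_eq_nnnorm, ← ofReal_norm, norm_smul, mem_sphere_zero_iff_norm.1 θ.2]
    simp [Real.norm_eq_abs, abs_of_pos hr]
  rw [Ker, h1, h2, ← ENNReal.ofReal_rpow_of_pos hr]

lemma ker_smul_lt {s : ℝ≥0∞} (hαn : α < n) (hs0 : s ≠ 0) (hst : s ≠ ⊤)
    (θ : sphere (0 : Eucl n) 1) {r : ℝ} (hr : 0 < r)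
    (h : s < (‖Ω (θ : Eucl n)‖₊ : ℝ≥0∞) / ENNReal.ofReal (r ^ ((n:ℝ) - α))) :
    r < (((‖Ω (θ : Eucl n)‖₊ : ℝ≥0∞) / s).toReal) ^ (1 / ((n:ℝ) - α)) := by
  set A : ℝ≥0∞ := (‖Ω (θ : Eucl n)‖₊ : ℝ≥0∞)
  have hna : (0:ℝ) < (n:ℝ) - α := by linarith
  have hrp : (0:ℝ) < r ^ ((n:ℝ) - α) := Real.rpow_pos_of_pos hr _
  set R := ENNReal.ofReal (r ^ ((n:ℝ) - α)) with hR
  have hR0 : R ≠ 0 := (ENNReal.ofReal_pos.2 hrp).ne'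
  have hRt : R ≠ ⊤ := ENNReal.ofReal_ne_top
  have h1 : s * R < A := (ENNReal.lt_div_iff_mul_lt (Or.inl hR0) (Or.inl hRt)).1 h
  have h2 : R < A / s := by
    rw [ENNReal.lt_div_iff_mul_lt (Or.inl hs0) (Or.inl hst), mul_comm]
    exact h1
  have hAs : A / s ≠ ⊤ := by
    rw [Ne, ENNReal.div_eq_top]
    rintro (⟨-, h⟩ | ⟨h, -⟩)
    exacts [hs0 h, ENNReal.coe_ne_top h]
  have h3 : r ^ ((n:ℝ) - α) < (A / s).toReal :=
    (ENNReal.ofReal_lt_iff_lt_toReal hrp.le hAs).1 h2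
  have h4 := Real.rpow_lt_rpow (Real.rpow_nonneg hr.le _) h3 (by positivity : 0 < 1 / ((n:ℝ) - α))
  rw [one_div] at h4 ⊢
  rwa [Real.rpow_rpow_inv hr.le hna.ne'] at h4

section Main
variable {n : ℕ} {α : ℝ} (Ω : Eucl n → ℝ)

lemma inner_bound_B (hα : 0 < α) (hαn : α < n) (hΩh : Homog n Ω)
    {M : ℝ≥0∞} (hM0 : M ≠ 0) (hMt : M ≠ ⊤) (θ : sphere (0 : Eucl n) 1) :
    (∫⁻ r : Ioi (0:ℝ), (Ker n α Ω ((r:ℝ) • (θ : Eucl n)) *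
        {z : Eucl n | M < Ker n α Ω z}.indicator 1 ((r:ℝ) • (θ : Eucl n)))
      ∂(MeasureTheory.Measure.volumeIoiPow (n - 1)))
      ≤ (‖Ω (θ : Eucl n)‖₊ : ℝ≥0∞) ^ ((n:ℝ)/((n:ℝ)-α))
        * (M ^ (1 - (n:ℝ)/((n:ℝ)-α)) * (ENNReal.ofReal α)⁻¹) := by
  have hn : (0:ℝ) < n := hα.trans hαn
  have hn0 : 0 < n := by exact_mod_cast hn
  have hna : (0:ℝ) < (n:ℝ) - α := by linarith
  have hq1 : (n:ℝ)/((n:ℝ)-α) - 1 = α / ((n:ℝ)-α) := by field_simp; ring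
  have hq1pos : (0:ℝ) < (n:ℝ)/((n:ℝ)-α) - 1 := by rw [hq1]; positivity
  set q : ℝ := (n:ℝ)/((n:ℝ)-α) with hqdef
  set A : ℝ≥0∞ := (‖Ω (θ : Eucl n)‖₊ : ℝ≥0∞) with hA
  have hAt : A ≠ ⊤ := ENNReal.coe_ne_top
  have hAM : A / M ≠ ⊤ := by
    rw [Ne, ENNReal.div_eq_top]
    rintro (⟨-, h⟩ | ⟨h, -⟩)
    exacts [hM0 h, hAt h]
  set ρ : ℝ := ((A / M).toReal) ^ (1 / ((n:ℝ) - α)) with hρdef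
  have hρ0 : 0 ≤ ρ := Real.rpow_nonneg ENNReal.toReal_nonneg _
  rw [lint_vIP (n-1) (fun r : ℝ => (Ker n α Ω (r • (θ:Eucl n)) *
    {z : Eucl n | M < Ker n α Ω z}.indicator 1 (r • (θ:Eucl n))))]
  calc ∫⁻ r in Ioi (0:ℝ), ENNReal.ofReal (r ^ (n-1)) * (Ker n α Ω (r • (θ:Eucl n)) *
        {z : Eucl n | M < Ker n α Ω z}.indicator 1 (r • (θ:Eucl n)))
      ≤ ∫⁻ r in Ioi (0:ℝ), ENNReal.ofReal (r ^ (n-1)) *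
        (Iio ρ).indicator (fun r => A * ENNReal.ofReal (r ^ (α - (n:ℝ)))) r := by
        apply setLIntegral_mono' measurableSet_Ioi
        intro r hr
        apply mul_le_mul_right
        by_cases hmem : (r • (θ:Eucl n)) ∈ {z : Eucl n | M < Ker n α Ω z}
        · have hlt : r < ρ := by
            apply ker_smul_lt Ω hαn hM0 hMt θ hr
            rw [← ker_smul Ω hΩh θ hr]
            exact hmem
          rw [indicator_of_mem hmem, indicator_of_mem (mem_Iio.2 hlt), Pi.one_apply, mul_one,
            ker_smul Ω hΩh θ hr, div_eq_mul_inv,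
            ← ENNReal.ofReal_inv_of_pos (Real.rpow_pos_of_pos hr _),
            ← Real.rpow_neg (le_of_lt hr), neg_sub]
        · rw [indicator_of_notMem hmem, mul_zero]
          exact zero_le
    _ = ∫⁻ r in Ioo (0:ℝ) ρ, ENNReal.ofReal (r ^ (n-1)) *
        (A * ENNReal.ofReal (r ^ (α - (n:ℝ)))) := lint_ind _ _ _
    _ = ∫⁻ r in Ioo (0:ℝ) ρ, A * ENNReal.ofReal (r ^ (α - 1)) := by
        apply setLIntegral_congr_fun measurableSet_Ioo
        intro r hr
        beta_reduce
        rw [mul_left_comm, ← ENNReal.ofReal_mul (pow_nonneg hr.1.le _),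
          ← Real.rpow_natCast r (n-1), Nat.cast_sub hn0, Nat.cast_one,
          ← Real.rpow_add hr.1]
        ring_nf
    _ = A * ENNReal.ofReal (ρ ^ α / α) := by
        rw [lintegral_const_mul' _ _ hAt, lint_rpow_Ioo α ρ hα hρ0]
    _ = A * ((A / M) ^ (q - 1) * (ENNReal.ofReal α)⁻¹) := by
        rw [ENNReal.ofReal_div_of_pos hα, div_eq_mul_inv]
        congr 2
        rw [hρdef, ← Real.rpow_mul ENNReal.toReal_nonneg,
          (by rw [hq1]; field_simp : (1 / ((n:ℝ) - α)) * α = q - 1),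
          ENNReal.toReal_rpow, ENNReal.ofReal_toReal
            (ENNReal.rpow_ne_top_of_nonneg hq1pos.le hAM)]
    _ = A ^ q * (M ^ (1 - q) * (ENNReal.ofReal α)⁻¹) := by
        rw [ENNReal.div_rpow_of_nonneg _ _ hq1pos.le, div_eq_mul_inv,
          ← ENNReal.rpow_neg, neg_sub]
        rcases eq_or_ne A 0 with hA0 | hA0
        · simp [hA0, ENNReal.zero_rpow_of_pos hq1pos, (show (0:ℝ) < q from div_pos hn hna),
            ENNReal.zero_rpow_of_pos (div_pos hn hna)]
        · calc A * (A ^ (q - 1) * M ^ (1 - q) * (ENNReal.ofReal α)⁻¹)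
              = (A ^ (1:ℝ) * A ^ (q - 1)) * (M ^ (1 - q) * (ENNReal.ofReal α)⁻¹) := by
                rw [ENNReal.rpow_one]; ring
            _ = _ := by rw [← ENNReal.rpow_add _ _ hA0 hAt]; norm_num

lemma truncKer_le (hα : 0 < α) (hαn : α < n) (hΩm : Measurable Ω) (hΩh : Homog n Ω)
    {M : ℝ≥0∞} (hM0 : M ≠ 0) (hMt : M ≠ ⊤) :
    (∫⁻ z, Ker n α Ω z * {w : Eucl n | M < Ker n α Ω w}.indicator 1 z)
      ≤ (∫⁻ θ : sphere (0:Eucl n) 1, ((‖Ω (θ : Eucl n)‖₊:ℝ≥0∞)) ^ ((n:ℝ)/((n:ℝ)-α))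
          ∂((volume : Measure (Eucl n)).toSphere))
        * (M ^ (1 - (n:ℝ)/((n:ℝ)-α)) * (ENNReal.ofReal α)⁻¹) := by
  have hn : (0:ℝ) < n := hα.trans hαn
  have hn0 : n ≠ 0 := by
    have : 0 < n := by exact_mod_cast hn
    omega
  have hna : (0:ℝ) < (n:ℝ) - α := by linarith
  have hT : MeasurableSet {w : Eucl n | M < Ker n α Ω w} :=
    measurableSet_lt measurable_const (ker_meas Ω hΩm)
  have hg : Measurable (fun z => Ker n α Ω z * {w : Eucl n | M < Ker n α Ω w}.indicator 1 z) :=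
    (ker_meas Ω hΩm).mul (measurable_one.indicator hT)
  rw [polar_lintegral hn0 _ hg]
  have hconst : M ^ (1 - (n:ℝ)/((n:ℝ)-α)) * (ENNReal.ofReal α)⁻¹ ≠ ⊤ := by
    apply ENNReal.mul_ne_top
    · rw [(by ring : 1 - (n:ℝ)/((n:ℝ)-α) = -((n:ℝ)/((n:ℝ)-α) - 1)), ENNReal.rpow_neg]
      simp only [Ne, ENNReal.inv_eq_top]
      exact (ENNReal.rpow_pos (pos_iff_ne_zero.2 hM0) hMt).ne'
    · simp only [Ne, ENNReal.inv_eq_top]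
      exact (ENNReal.ofReal_pos.2 hα).ne'
  calc _ ≤ ∫⁻ θ : sphere (0:Eucl n) 1, ((‖Ω (θ:Eucl n)‖₊:ℝ≥0∞)) ^ ((n:ℝ)/((n:ℝ)-α))
        * (M ^ (1 - (n:ℝ)/((n:ℝ)-α)) * (ENNReal.ofReal α)⁻¹)
        ∂((volume : Measure (Eucl n)).toSphere) :=
        lintegral_mono fun θ => inner_bound_B Ω hα hαn hΩh hM0 hMt θ
    _ = _ := lintegral_mul_const' _ _ hconst

end Main

lemma pow_merge (x : ℝ≥0∞) (hx0 : x ≠ 0) (hxt : x ≠ ⊤) (c : ℝ) : x ^ (c-1) * x = x ^ c := by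
  have h := ENNReal.rpow_add (c-1) 1 hx0 hxt
  rw [ENNReal.rpow_one] at h
  rw [← h]
  norm_num

lemma arith1 (q : ℝ) (hq1 : 1 < q) (B a N l : ℝ≥0∞) (hN0 : N ≠ 0) (hNt : N ≠ ⊤)
    (hl0 : l ≠ 0) (hlt : l ≠ ⊤) :
    B * ((l / (2 * N)) ^ (1 - q) * a) * N * (l / 2)⁻¹
      = B * a * 2 ^ q * N ^ q * (l⁻¹) ^ q := by
  have hq0 : (0:ℝ) ≤ q - 1 := by linarith
  have e1 : (l / (2*N)) ^ (1-q) = ((2:ℝ≥0∞)*N*l⁻¹) ^ (q-1) := by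
    rw [(by ring : (1:ℝ) - q = -(q-1)), ENNReal.rpow_neg, ← ENNReal.inv_rpow]
    congr 1
    rw [div_eq_mul_inv, ENNReal.mul_inv (Or.inl hl0) (Or.inl hlt), inv_inv]
    ring
  have e2 : ((2:ℝ≥0∞)*N*l⁻¹) ^ (q-1) = 2^(q-1) * N^(q-1) * (l⁻¹)^(q-1) := by
    rw [ENNReal.mul_rpow_of_nonneg _ _ hq0, ENNReal.mul_rpow_of_nonneg _ _ hq0]
  have e3 : (l/2)⁻¹ = 2 * l⁻¹ := by
    rw [div_eq_mul_inv, ENNReal.mul_inv (Or.inl hl0) (Or.inl hlt), inv_inv]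
    ring
  rw [e1, e2, e3, ← pow_merge 2 two_ne_zero ENNReal.ofNat_ne_top q,
    ← pow_merge N hN0 hNt q, ← pow_merge l⁻¹ (ENNReal.inv_ne_zero.2 hlt)
      (ENNReal.inv_ne_top.2 hl0) q]
  ring

lemma arith2 (q : ℝ) (hq : 0 < q) (B a N l : ℝ≥0∞) (hl0 : l ≠ 0) (hlt : l ≠ ⊤) :
    l * (B * a * 2 ^ q * N ^ q * (l⁻¹) ^ q) ^ (1/q) ≤ 2 * a ^ (1/q) * B ^ (1/q) * N := by
  have hq0 : (0:ℝ) ≤ 1/q := by positivity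
  have key : ∀ x : ℝ≥0∞, (x ^ q) ^ (1/q) = x := by
    intro x
    rw [← ENNReal.rpow_mul, mul_one_div_cancel hq.ne', ENNReal.rpow_one]
  rw [ENNReal.mul_rpow_of_nonneg _ _ hq0, ENNReal.mul_rpow_of_nonneg _ _ hq0,
    ENNReal.mul_rpow_of_nonneg _ _ hq0, ENNReal.mul_rpow_of_nonneg _ _ hq0,
    key, key, key]
  refine le_of_eq ?_
  calc l * (B ^ (1/q) * a ^ (1/q) * 2 * N * l⁻¹)
      = (2 * a ^ (1/q) * B ^ (1/q) * N) * (l * l⁻¹) := by ring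
    _ = 2 * a ^ (1/q) * B ^ (1/q) * N := by
        rw [ENNReal.mul_inv_cancel hl0 hlt, mul_one]


/-- `|a - b|` in `ℝ≥0∞`. -/
noncomputable def ediff (a b : ℝ≥0∞) : ℝ≥0∞ := (a - b) ⊔ (b - a)

theorem stmt2 (n : ℕ) (α : ℝ) (hα : 0 < α) (hαn : α < n) :
    ∃ C : ℝ≥0∞, 0 < C ∧ C < ⊤ ∧
      ∀ (Ω f : Eucl n → ℝ), Measurable Ω → Homog n Ω →
        sphereLpPow n ((n:ℝ)/((n:ℝ)-α)) Ω < ⊤ → Integrable f →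
        wnormSet volume ((n:ℝ)/((n:ℝ)-α)) Set.univ (fracIntAbs n α Ω f)
          ≤ C * sphereLpNorm n ((n:ℝ)/((n:ℝ)-α)) Ω * eLpNorm f 1 volume := by
  have hn : (0:ℝ) < n := hα.trans hαn
  have hna : (0:ℝ) < (n:ℝ) - α := by linarith
  set q : ℝ := (n:ℝ)/((n:ℝ)-α) with hq
  have hq1 : 1 < q := (one_lt_div hna).2 (by linarith)
  have hqpos : (0:ℝ) < q := by linarith
  have h1q : (0:ℝ) < 1/q := by positivity
  set a : ℝ≥0∞ := (ENNReal.ofReal α)⁻¹ with ha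
  have ha0 : a ≠ 0 := ENNReal.inv_ne_zero.2 ENNReal.ofReal_ne_top
  have hat : a ≠ ⊤ := ENNReal.inv_ne_top.2 (ENNReal.ofReal_pos.2 hα).ne'
  refine ⟨2 * a ^ (1/q), ?_, ?_, ?_⟩
  · exact ENNReal.mul_pos two_ne_zero (ENNReal.rpow_pos (pos_iff_ne_zero.2 ha0) hat).ne'
  · exact ENNReal.mul_lt_top ENNReal.ofNat_lt_top
      (ENNReal.rpow_lt_top_of_nonneg h1q.le hat)
  intro Ω f hΩm hΩh hΩLp hf
  set B := sphereLpPow n q Ω with hBdef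
  set N := eLpNorm f 1 volume with hNdef
  have hNt : N ≠ ⊤ := ((memLp_one_iff_integrable).2 hf).eLpNorm_lt_top.ne
  obtain ⟨F, hFm, hFae⟩ : ∃ F : Eucl n → ℝ≥0∞, Measurable F ∧
      (fun y => (‖f y‖₊ : ℝ≥0∞)) =ᵐ[volume] F :=
    ⟨hf.1.aemeasurable.enorm.mk _, hf.1.aemeasurable.enorm.measurable_mk, hf.1.aemeasurable.enorm.ae_eq_mk⟩
  have hNF : ∫⁻ y, F y = N := by
    rw [hNdef, eLpNorm_one_eq_lintegral_enorm]
    exact (lintegral_congr_ae hFae).symm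
  have hT : ∀ x, fracIntAbs n α Ω f x = ∫⁻ y, Ker n α Ω (x - y) * F y := by
    intro x
    rw [fracIntAbs]
    refine lintegral_congr_ae ?_
    filter_upwards [hFae] with y hy
    rw [← hy, Ker, div_eq_mul_inv, div_eq_mul_inv]
    ring
  rw [wnormSet]
  refine iSup_le fun l => ?_
  rcases eq_or_ne (l : ℝ≥0∞) 0 with hl0 | hl0
  · rw [hl0, zero_mul]; exact zero_le
  have hlt : (l : ℝ≥0∞) ≠ ⊤ := ENNReal.coe_ne_top
  rcases eq_or_ne N 0 with hN0 | hN0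
  · have hF0 : F =ᵐ[volume] 0 := (lintegral_eq_zero_iff hFm).1 (hNF.trans hN0)
    have hzero : ∀ x, fracIntAbs n α Ω f x = 0 := by
      intro x
      rw [hT x]
      have hz : (fun y => Ker n α Ω (x - y) * F y) =ᵐ[volume] 0 := by
        filter_upwards [hF0] with y hy
        simp [hy]
      rw [lintegral_congr_ae hz]
      simp
    have hempty : {x : Eucl n | x ∈ univ ∧ (l:ℝ≥0∞) < fracIntAbs n α Ω f x} = ∅ := by
      ext x
      simp [hzero x]
    rw [hempty, measure_empty, ENNReal.zero_rpow_of_pos h1q, mul_zero]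
    exact zero_le
  -- main case
  set M : ℝ≥0∞ := (l:ℝ≥0∞) / (2 * N) with hM
  have h2N0 : (2:ℝ≥0∞) * N ≠ 0 := mul_ne_zero two_ne_zero hN0
  have h2Nt : (2:ℝ≥0∞) * N ≠ ⊤ := ENNReal.mul_ne_top ENNReal.ofNat_ne_top hNt
  have hM0 : M ≠ 0 := by
    rw [hM, Ne, ENNReal.div_eq_zero_iff]
    push_neg
    exact ⟨hl0, h2Nt⟩
  have hMt : M ≠ ⊤ := by
    rw [hM, Ne, ENNReal.div_eq_top]
    rintro (⟨-, h⟩ | ⟨h, -⟩)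
    exacts [h2N0 h, hlt h]
  have hTset : MeasurableSet {w : Eucl n | M < Ker n α Ω w} :=
    measurableSet_lt measurable_const (ker_meas Ω hΩm)
  set K2 : Eucl n → ℝ≥0∞ :=
    fun z => Ker n α Ω z * {w : Eucl n | M < Ker n α Ω w}.indicator 1 z with hK2
  have hK2m : Measurable K2 := (ker_meas Ω hΩm).mul (measurable_one.indicator hTset)
  set T2 : Eucl n → ℝ≥0∞ := fun x => ∫⁻ y, K2 (x - y) * F y with hT2
  have huncurry : Measurable (fun p : Eucl n × Eucl n => K2 (p.1 - p.2) * F p.2) :=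
    (hK2m.comp (measurable_fst.sub measurable_snd)).mul (hFm.comp measurable_snd)
  have hT2m : Measurable T2 := Measurable.lintegral_prod_right' huncurry
  have hsplit : ∀ x, fracIntAbs n α Ω f x ≤ M * N + T2 x := by
    intro x
    rw [hT x]
    have hptw : ∀ y, Ker n α Ω (x-y) * F y ≤ M * F y + K2 (x-y) * F y := by
      intro y
      rcases le_or_gt (Ker n α Ω (x-y)) M with h | h
      · exact le_add_right (mul_le_mul_left h _)
      · have he : K2 (x - y) = Ker n α Ω (x - y) := by
          rw [hK2]
          dsimp only
          rw [indicator_of_mem (show (x-y) ∈ {w : Eucl n | M < Ker n α Ω w} from h)]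
          simp
        rw [he]
        exact le_add_self
    calc ∫⁻ y, Ker n α Ω (x-y) * F y
        ≤ ∫⁻ y, (M * F y + K2 (x-y) * F y) := lintegral_mono hptw
      _ = (∫⁻ y, M * F y) + ∫⁻ y, K2 (x-y) * F y := lintegral_add_left (hFm.const_mul M) _
      _ = M * N + T2 x := by rw [lintegral_const_mul' M _ hMt, hNF]
  have hMN : M * N = (l:ℝ≥0∞) / 2 := by
    rw [hM, div_eq_mul_inv, ENNReal.mul_inv (Or.inr hNt) (Or.inr hN0), mul_assoc,
      mul_assoc, ENNReal.inv_mul_cancel hN0 hNt, mul_one, ← div_eq_mul_inv]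
  have hsub : {x : Eucl n | x ∈ univ ∧ (l:ℝ≥0∞) < fracIntAbs n α Ω f x}
      ⊆ {x : Eucl n | (l:ℝ≥0∞)/2 ≤ T2 x} := by
    intro x hx
    by_contra hc
    simp only [mem_setOf_eq, not_le] at hc
    have h1 : (l:ℝ≥0∞) < M * N + T2 x := lt_of_lt_of_le hx.2 (hsplit x)
    have h2 : (l:ℝ≥0∞) < (l:ℝ≥0∞)/2 + (l:ℝ≥0∞)/2 :=
      h1.trans_le (by rw [hMN]; exact add_le_add_right hc.le _)
    rw [ENNReal.add_halves] at h2
    exact lt_irrefl _ h2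
  have hl20 : (l:ℝ≥0∞)/2 ≠ 0 := by
    rw [Ne, ENNReal.div_eq_zero_iff]
    push_neg
    exact ⟨hl0, ENNReal.ofNat_ne_top⟩
  have hl2t : (l:ℝ≥0∞)/2 ≠ ⊤ := by
    rw [Ne, ENNReal.div_eq_top]
    rintro (⟨-, h⟩ | ⟨h, -⟩)
    exacts [two_ne_zero h, hlt h]
  have hcheb : volume {x : Eucl n | (l:ℝ≥0∞)/2 ≤ T2 x} ≤ (∫⁻ x, T2 x) / ((l:ℝ≥0∞)/2) :=
    meas_ge_le_lintegral_div hT2m.aemeasurable hl20 hl2t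
  have hTon : ∫⁻ x, T2 x = (∫⁻ z, K2 z) * N := by
    rw [hT2]
    dsimp only
    rw [lintegral_lintegral_swap huncurry.aemeasurable]
    calc ∫⁻ y, ∫⁻ x, K2 (x - y) * F y
        = ∫⁻ y, (∫⁻ x, K2 (x-y)) * F y :=
          lintegral_congr fun y =>
            lintegral_mul_const _ (hK2m.comp (measurable_id.sub measurable_const))
      _ = ∫⁻ y, (∫⁻ z, K2 z) * F y := by
          refine lintegral_congr fun y => ?_
          congr 1
          exact lintegral_sub_right_eq_self K2 y
      _ = (∫⁻ z, K2 z) * N := by rw [lintegral_const_mul _ hFm, hNF]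
  have hK2bound : (∫⁻ z, K2 z) ≤ B * (M ^ (1-q) * a) :=
    truncKer_le Ω hα hαn hΩm hΩh hM0 hMt
  have hmeasS : volume {x : Eucl n | x ∈ univ ∧ (l:ℝ≥0∞) < fracIntAbs n α Ω f x}
      ≤ B * a * 2^q * N^q * (((l:ℝ≥0∞))⁻¹)^q := by
    calc volume {x : Eucl n | x ∈ univ ∧ (l:ℝ≥0∞) < fracIntAbs n α Ω f x}
        ≤ volume {x : Eucl n | (l:ℝ≥0∞)/2 ≤ T2 x} := measure_mono hsub
      _ ≤ (∫⁻ x, T2 x) / ((l:ℝ≥0∞)/2) := hcheb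
      _ ≤ (B * (M^(1-q) * a) * N) / ((l:ℝ≥0∞)/2) := by
          rw [hTon]
          exact ENNReal.div_le_div_right (mul_le_mul_left hK2bound _) _
      _ = B * a * 2^q * N^q * (((l:ℝ≥0∞))⁻¹)^q := by
          rw [div_eq_mul_inv, hM]
          exact arith1 q hq1 B a N l hN0 hNt hl0 hlt
  calc (l:ℝ≥0∞) * (volume {x : Eucl n | x ∈ univ ∧ (l:ℝ≥0∞) < fracIntAbs n α Ω f x}) ^ (1/q)
      ≤ (l:ℝ≥0∞) * (B * a * 2^q * N^q * (((l:ℝ≥0∞))⁻¹)^q) ^ (1/q) :=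
        mul_le_mul_right (ENNReal.rpow_le_rpow hmeasS h1q.le) _
    _ ≤ 2 * a^(1/q) * B^(1/q) * N := arith2 q hqpos B a N l hl0 hlt
    _ = 2 * a ^ (1/q) * sphereLpNorm n q Ω * eLpNorm f 1 volume := by
        rw [sphereLpNorm, hBdef, hNdef]
end Ker
end
end

section
/- Let $0<\alpha<n$, let $\Omega$ be homogeneous of degree zero, bounded and Lipschitz on $\mathbb{S}^{n-1}$, and let $f$ be a nonnegative integrable function supported in $B(0,1)$ with $\|f\|_{L^1}=1$; set $f_t(y)=t^{-n}f(y/t)$. Then for every $\rho>0$, $\lim_{t\to 0^+}\Big\|T_{\Omega}^{\alpha}f_t(\cdot)-\frac{\Omega(\cdot)}{|\cdot|^{n-\alpha}}\Big\|_{L^{n/(n-\alpha),\infty}(\mathbb{R}^n\setminus B(0,\rho))}=0$. -/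
open MeasureTheory Metric Set ENNReal Filter

noncomputable section

lemma rpow_abs_diff_le {β m r s : ℝ} (hβ : β < 0) (hm : 0 < m) (hr : m ≤ r) (hs : m ≤ s) :
    |r ^ β - s ^ β| ≤ (-β) * m ^ (β - 1) * |r - s| := by
  wlog h : s ≤ r generalizing r s
  · rw [abs_sub_comm (r^β), abs_sub_comm r s]; exact this hs hr (le_of_not_ge h)
  rcases eq_or_lt_of_le h with rfl | hlt
  · simp
  obtain ⟨c, hc, hc'⟩ := exists_hasDerivAt_eq_slope (fun x => x ^ β)
    (fun x => β * x ^ (β - 1)) hlt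
    (fun x hx => (Real.continuousAt_rpow_const x β
      (Or.inl (ne_of_gt (hm.trans_le (hs.trans hx.1))))).continuousWithinAt)
    (fun x hx => Real.hasDerivAt_rpow_const
      (Or.inl (ne_of_gt (hm.trans_le (hs.trans hx.1.le)))))
  have hcm : m ≤ c := hs.trans hc.1.le
  have hcpow : c ^ (β - 1) ≤ m ^ (β - 1) :=
    Real.rpow_le_rpow_of_nonpos hm hcm (by linarith)
  have hrs : 0 < r - s := sub_pos.2 hlt
  have heq : r ^ β - s ^ β = β * c ^ (β - 1) * (r - s) := by
    field_simp at hc' ⊢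
    linarith [hc']
  rw [heq, abs_mul, abs_mul, abs_of_pos hrs, abs_of_neg hβ]
  have : |c ^ (β-1)| = c ^ (β-1) := abs_of_pos (Real.rpow_pos_of_pos (hm.trans_le hcm) _)
  rw [this]
  have h0 : (0:ℝ) ≤ -β := by linarith
  gcongr

lemma unit_diff_le {E : Type*} [NormedAddCommGroup E] [NormedSpace ℝ E] {a b : E}
    (ha : a ≠ 0) (hb : b ≠ 0) :
    ‖‖a‖⁻¹ • a - ‖b‖⁻¹ • b‖ ≤ 2 * ‖a - b‖ / ‖a‖ := by
  have ha' : (0:ℝ) < ‖a‖ := norm_pos_iff.2 ha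
  have hb' : (0:ℝ) < ‖b‖ := norm_pos_iff.2 hb
  have hsplit : ‖a‖⁻¹ • a - ‖b‖⁻¹ • b = ‖a‖⁻¹ • (a - b) + (‖a‖⁻¹ - ‖b‖⁻¹) • b := by
    rw [smul_sub, sub_smul]; abel
  rw [hsplit]
  refine (norm_add_le _ _).trans ?_
  rw [norm_smul, norm_smul]
  have h1 : ‖(‖a‖⁻¹ : ℝ)‖ = ‖a‖⁻¹ := by
    rw [Real.norm_eq_abs, abs_of_pos (inv_pos.2 ha')]
  have h2 : ‖(‖a‖⁻¹ - ‖b‖⁻¹ : ℝ)‖ * ‖b‖ ≤ ‖a - b‖ / ‖a‖ := by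
    rw [Real.norm_eq_abs]
    have heq : ‖a‖⁻¹ - ‖b‖⁻¹ = (‖b‖ - ‖a‖)/(‖a‖ * ‖b‖) := by field_simp
    rw [heq, abs_div, abs_of_pos (mul_pos ha' hb')]
    have hbn : |‖b‖ - ‖a‖| ≤ ‖a - b‖ := by
      rw [norm_sub_rev]; exact abs_norm_sub_norm_le b a
    calc |‖b‖ - ‖a‖| / (‖a‖ * ‖b‖) * ‖b‖ = |‖b‖ - ‖a‖| / ‖a‖ := by field_simp
      _ ≤ ‖a - b‖ / ‖a‖ := by gcongr
  rw [h1]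
  have h3 : ‖a‖⁻¹ * ‖a - b‖ = ‖a - b‖ / ‖a‖ := by rw [inv_mul_eq_div]
  have h4 : 2 * ‖a - b‖ / ‖a‖ = ‖a - b‖/‖a‖ + ‖a - b‖/‖a‖ := by ring
  rw [h3, h4]
  exact add_le_add le_rfl h2

section
variable {n : ℕ} {Ω : Eucl n → ℝ} {B L α : ℝ}

lemma omega_unit (hhom : Homog n Ω) {z : Eucl n} (hz : z ≠ 0) : Ω z = Ω (‖z‖⁻¹ • z) := by
  have hz' : (0:ℝ) < ‖z‖ := norm_pos_iff.2 hz
  have hu : (‖z‖⁻¹ • z : Eucl n) ≠ 0 := smul_ne_zero (inv_ne_zero hz'.ne') hz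
  have := hhom ‖z‖ hz' (‖z‖⁻¹ • z) hu
  rwa [smul_smul, mul_inv_cancel₀ hz'.ne', one_smul] at this

lemma omega_mem_sphere {z : Eucl n} (hz : z ≠ 0) : (‖z‖⁻¹ • z) ∈ sphere (0 : Eucl n) 1 := by
  have hz' : (0:ℝ) < ‖z‖ := norm_pos_iff.2 hz
  rw [mem_sphere_zero_iff_norm, norm_smul, Real.norm_eq_abs, abs_of_pos (inv_pos.2 hz'),
    inv_mul_cancel₀ hz'.ne']

lemma omega_bound (hhom : Homog n Ω) (hB : ∀ u ∈ sphere (0 : Eucl n) 1, |Ω u| ≤ B)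
    {z : Eucl n} (hz : z ≠ 0) : |Ω z| ≤ B := by
  rw [omega_unit hhom hz]; exact hB _ (omega_mem_sphere hz)

lemma kernel_diff (hα : 0 < α) (hαn : α < n) (hhom : Homog n Ω)
    (hB : ∀ u ∈ sphere (0 : Eucl n) 1, |Ω u| ≤ B)
    (hL : ∀ u ∈ sphere (0 : Eucl n) 1, ∀ v ∈ sphere (0 : Eucl n) 1,
      |Ω u - Ω v| ≤ L * ‖u - v‖) (hL0 : 0 ≤ L) (hB0 : 0 ≤ B)
    {ρ : ℝ} (hρ : 0 < ρ) {z w : Eucl n} (hz : ρ ≤ ‖z‖) (hw : ‖w‖ ≤ ρ/2) :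
    |Ω (z-w) / ‖z-w‖ ^ ((n:ℝ)-α) - Ω z / ‖z‖ ^ ((n:ℝ)-α)| ≤
      ((B * ((n:ℝ)-α) * 2^(1-(α-(n:ℝ))) + 4*L)/ρ) * ‖w‖ * ‖z‖^(α-(n:ℝ)) := by
  set β : ℝ := α - n with hβdef
  have hβ : β < 0 := by simp [hβdef]; linarith
  have hz0 : (0:ℝ) < ‖z‖ := lt_of_lt_of_le hρ hz
  have hzne : z ≠ 0 := norm_pos_iff.1 hz0
  have hzw : ‖z‖/2 ≤ ‖z - w‖ := by
    have := norm_sub_norm_le z w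
    have h2 : ‖w‖ ≤ ‖z‖/2 := hw.trans (by linarith)
    linarith
  have hzw0 : (0:ℝ) < ‖z - w‖ := lt_of_lt_of_le (by linarith) hzw
  have hzwne : z - w ≠ 0 := norm_pos_iff.1 hzw0
  -- rewrite divisions as rpow with negative exponent
  have hKform : ∀ v : Eucl n, v ≠ 0 → Ω v / ‖v‖ ^ ((n:ℝ)-α) = Ω v * ‖v‖ ^ β := by
    intro v hv
    have : ‖v‖ ^ β = (‖v‖ ^ ((n:ℝ)-α))⁻¹ := by
      rw [hβdef, show α - (n:ℝ) = -((n:ℝ)-α) by ring, Real.rpow_neg (norm_nonneg _)]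
    rw [this, div_eq_mul_inv]
  rw [hKform _ hzwne, hKform _ hzne]
  have hsplit : Ω (z-w) * ‖z-w‖ ^ β - Ω z * ‖z‖ ^ β
      = Ω (z-w) * (‖z-w‖ ^ β - ‖z‖ ^ β) + (Ω (z-w) - Ω z) * ‖z‖ ^ β := by ring
  rw [hsplit]
  have hzβpos : (0:ℝ) < ‖z‖ ^ β := Real.rpow_pos_of_pos hz0 _
  -- term 1
  have h1 : |Ω (z-w) * (‖z-w‖ ^ β - ‖z‖ ^ β)| ≤ (B * ((n:ℝ)-α) * 2^(1-β)/ρ) * ‖w‖ * ‖z‖^β := by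
    rw [abs_mul]
    have hd : |‖z-w‖ ^ β - ‖z‖ ^ β| ≤ (-β) * (‖z‖/2) ^ (β-1) * ‖w‖ := by
      have hmvt := rpow_abs_diff_le hβ (by linarith : (0:ℝ) < ‖z‖/2) hzw (by linarith : ‖z‖/2 ≤ ‖z‖)
      refine hmvt.trans ?_
      have : |‖z - w‖ - ‖z‖| ≤ ‖w‖ := by
        have h := abs_norm_sub_norm_le (z - w) z
        simpa using h
      have hnn : (0:ℝ) ≤ (-β) * (‖z‖/2) ^ (β-1) :=
        mul_nonneg (by linarith) (Real.rpow_pos_of_pos (by linarith) _).le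
      exact mul_le_mul_of_nonneg_left this hnn
    have hpow : (‖z‖/2) ^ (β-1) ≤ 2^(1-β) * ‖z‖^β / ρ := by
      have e1 : (‖z‖/2 : ℝ) ^ (β-1) = ‖z‖^(β-1) * 2^(1-β) := by
        rw [Real.div_rpow (norm_nonneg _) (by norm_num : (0:ℝ) ≤ 2), div_eq_mul_inv,
          ← Real.rpow_neg (by norm_num : (0:ℝ) ≤ 2)]
        ring_nf
      have e2 : ‖z‖^(β-1) = ‖z‖^β * ‖z‖⁻¹ := by
        rw [show β - 1 = β + (-1) by ring, Real.rpow_add hz0, Real.rpow_neg_one]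
      rw [e1, e2]
      have : ‖z‖⁻¹ ≤ ρ⁻¹ := by
        exact inv_anti₀ hρ hz
      calc ‖z‖^β * ‖z‖⁻¹ * 2^(1-β) ≤ ‖z‖^β * ρ⁻¹ * 2^(1-β) := by
            gcongr
        _ = 2^(1-β) * ‖z‖^β / ρ := by rw [div_eq_mul_inv]; ring
    calc |Ω (z-w)| * |‖z-w‖ ^ β - ‖z‖ ^ β|
        ≤ B * ((-β) * (‖z‖/2) ^ (β-1) * ‖w‖) := by
          exact mul_le_mul (omega_bound hhom hB hzwne) hd (abs_nonneg _) hB0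
      _ ≤ B * ((-β) * (2^(1-β) * ‖z‖^β / ρ) * ‖w‖) := by
          gcongr
          · linarith
      _ = (B * ((n:ℝ)-α) * 2^(1-β)/ρ) * ‖w‖ * ‖z‖^β := by
          rw [hβdef]; field_simp; ring
  -- term 2
  have h2 : |(Ω (z-w) - Ω z) * ‖z‖ ^ β| ≤ (4*L/ρ) * ‖w‖ * ‖z‖^β := by
    rw [abs_mul, abs_of_pos hzβpos]
    have hΩd : |Ω (z-w) - Ω z| ≤ 4 * L * ‖w‖ / ‖z‖ := by
      rw [omega_unit hhom hzwne, omega_unit hhom hzne]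
      refine (hL _ (omega_mem_sphere hzwne) _ (omega_mem_sphere hzne)).trans ?_
      have hud : ‖‖z-w‖⁻¹ • (z-w) - ‖z‖⁻¹ • z‖ ≤ 2 * ‖(z-w) - z‖ / ‖z-w‖ :=
        unit_diff_le hzwne hzne
      have hww : ‖(z-w) - z‖ = ‖w‖ := by
        rw [show (z-w) - z = -w by abel, norm_neg]
      rw [hww] at hud
      have hud2 : 2 * ‖w‖ / ‖z-w‖ ≤ 2 * ‖w‖ / (‖z‖/2) := by
        gcongr <;> linarith
      have : (2 : ℝ) * ‖w‖ / (‖z‖/2) = 4 * ‖w‖ / ‖z‖ := by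
        field_simp; ring
      calc L * ‖‖z-w‖⁻¹ • (z-w) - ‖z‖⁻¹ • z‖ ≤ L * (4 * ‖w‖ / ‖z‖) := by
            refine mul_le_mul_of_nonneg_left ?_ hL0
            rw [← this]; exact hud.trans hud2
        _ = 4 * L * ‖w‖ / ‖z‖ := by ring
    calc |Ω (z-w) - Ω z| * ‖z‖ ^ β ≤ (4 * L * ‖w‖ / ‖z‖) * ‖z‖ ^ β := by
          gcongr
      _ ≤ (4 * L * ‖w‖ / ρ) * ‖z‖ ^ β := by gcongr <;> positivity
      _ = (4*L/ρ) * ‖w‖ * ‖z‖^β := by ring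
  calc |Ω (z-w) * (‖z-w‖ ^ β - ‖z‖ ^ β) + (Ω (z-w) - Ω z) * ‖z‖ ^ β|
      ≤ |Ω (z-w) * (‖z-w‖ ^ β - ‖z‖ ^ β)| + |(Ω (z-w) - Ω z) * ‖z‖ ^ β| := abs_add_le _ _
    _ ≤ (B * ((n:ℝ)-α) * 2^(1-β)/ρ) * ‖w‖ * ‖z‖^β + (4*L/ρ) * ‖w‖ * ‖z‖^β := add_le_add h1 h2
    _ = ((B * ((n:ℝ)-α) * 2^(1-β) + 4*L)/ρ) * ‖w‖ * ‖z‖^β := by ring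

lemma dil_integral {f : Eucl n → ℝ} (hf : Integrable f) {t : ℝ} (ht : 0 < t)
    (hnorm : (∫ y, f y) = 1) : (∫ y, dil n t f y) = 1 := by
  unfold dil
  rw [integral_const_mul, MeasureTheory.Measure.integral_comp_smul volume f t⁻¹,
    finrank_euclideanSpace_fin, hnorm]
  have ht' : t ≠ 0 := ht.ne'
  rw [smul_eq_mul, mul_one, abs_of_pos (show (0:ℝ) < (t⁻¹ ^ n)⁻¹ by positivity)]
  rw [← inv_pow]
  exact mul_inv_cancel₀ (pow_ne_zero n (inv_ne_zero ht'))

lemma dil_integrable {f : Eucl n → ℝ} (hf : Integrable f) {t : ℝ} (ht : 0 < t) :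
    Integrable (dil n t f) := by
  unfold dil
  exact (hf.comp_smul (inv_ne_zero ht.ne')).const_mul _

lemma dil_supp {f : Eucl n → ℝ} (hsupp : Function.support f ⊆ closedBall (0 : Eucl n) 1)
    {t : ℝ} (ht : 0 < t) {y : Eucl n} (hy : dil n t f y ≠ 0) : ‖y‖ ≤ t := by
  unfold dil at hy
  have hfy : f (t⁻¹ • y) ≠ 0 := by
    intro h; rw [h, mul_zero] at hy; exact hy rfl
  have := hsupp (Function.mem_support.2 hfy)
  rw [mem_closedBall_zero_iff, norm_smul, Real.norm_eq_abs, abs_of_pos (inv_pos.2 ht)] at this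
  calc ‖y‖ = t * (t⁻¹ * ‖y‖) := by field_simp
    _ ≤ t * 1 := mul_le_mul_of_nonneg_left this ht.le
    _ = t := mul_one t

lemma approx_bound (hα : 0 < α) (hαn : α < n) (hmeas : Measurable Ω) (hhom : Homog n Ω)
    (hB : ∀ u ∈ sphere (0 : Eucl n) 1, |Ω u| ≤ B)
    (hL : ∀ u ∈ sphere (0 : Eucl n) 1, ∀ v ∈ sphere (0 : Eucl n) 1,
      |Ω u - Ω v| ≤ L * ‖u - v‖) (hL0 : 0 ≤ L) (hB0 : 0 ≤ B)
    {f : Eucl n → ℝ} (hf : Integrable f) (hpos : ∀ y, 0 ≤ f y)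
    (hsupp : Function.support f ⊆ closedBall (0 : Eucl n) 1)
    (hnorm : (∫ y, f y) = 1)
    {ρ : ℝ} (hρ : 0 < ρ) {t : ℝ} (ht : 0 < t) (ht2 : t ≤ ρ/2)
    {x : Eucl n} (hx : ρ ≤ ‖x‖) :
    |fracInt n α Ω (dil n t f) x - Ω x / ‖x‖ ^ ((n:ℝ)-α)| ≤
      ((B * ((n:ℝ)-α) * 2^(1-(α-(n:ℝ))) + 4*L)/ρ) * t * ‖x‖^(α-(n:ℝ)) := by
  set C : ℝ := (B * ((n:ℝ)-α) * 2^(1-(α-(n:ℝ))) + 4*L)/ρ with hC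
  have hC0 : 0 ≤ C := by
    apply div_nonneg _ hρ.le
    have : (0:ℝ) ≤ 2^(1-(α-(n:ℝ))) := (Real.rpow_pos_of_pos (by norm_num) _).le
    have h4 := mul_nonneg (mul_nonneg hB0 (sub_pos.2 hαn).le) this
    linarith
  have hx0 : (0:ℝ) < ‖x‖ := lt_of_lt_of_le hρ hx
  have hxβ : (0:ℝ) < ‖x‖ ^ (α-(n:ℝ)) := Real.rpow_pos_of_pos hx0 _
  have hd_int : Integrable (dil n t f) := dil_integrable hf ht
  have hd_nonneg : ∀ y, 0 ≤ dil n t f y := fun y =>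
    mul_nonneg (inv_nonneg.2 (pow_pos ht n).le) (hpos _)
  -- kernel measurability
  have hKmeas : Measurable (fun z : Eucl n => Ω z / ‖z‖ ^ ((n:ℝ)-α)) :=
    hmeas.div ((continuous_norm.rpow_const (fun z => Or.inr (by linarith))).measurable)
  have hKxmeas : AEStronglyMeasurable
      (fun y => (Ω (x - y) / ‖x - y‖ ^ ((n:ℝ)-α)) * dil n t f y) volume := by
    exact ((hKmeas.comp (measurable_const.sub measurable_id)).aestronglyMeasurable.mul
      hd_int.aestronglyMeasurable)
  -- pointwise bound on |K(x-y)| on the support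
  have hxy : ∀ y : Eucl n, ‖y‖ ≤ t → ρ/2 ≤ ‖x - y‖ := by
    intro y hy
    have := norm_sub_norm_le x y
    linarith
  have hKbd : ∀ y : Eucl n, ‖y‖ ≤ t →
      |Ω (x - y) / ‖x - y‖ ^ ((n:ℝ)-α)| ≤ B * (ρ/2) ^ (α-(n:ℝ)) := by
    intro y hy
    have h2 : (0:ℝ) < ‖x - y‖ := lt_of_lt_of_le (by linarith) (hxy y hy)
    have hne : x - y ≠ 0 := norm_pos_iff.1 h2
    rw [abs_div, abs_of_pos (Real.rpow_pos_of_pos h2 _), div_eq_mul_inv,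
      ← Real.rpow_neg (norm_nonneg _)]
    have hneg : -((n:ℝ)-α) = α-(n:ℝ) := by ring
    rw [hneg]
    have h3 : ‖x - y‖ ^ (α-(n:ℝ)) ≤ (ρ/2) ^ (α-(n:ℝ)) :=
      Real.rpow_le_rpow_of_nonpos (by linarith) (hxy y hy) (by linarith)
    exact mul_le_mul (omega_bound hhom hB hne) h3 (Real.rpow_pos_of_pos h2 _).le hB0
  have h1 : Integrable (fun y => (Ω (x - y) / ‖x - y‖ ^ ((n:ℝ)-α)) * dil n t f y) := by
    refine (hd_int.const_mul (B * (ρ/2) ^ (α-(n:ℝ)))).mono' hKxmeas ?_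
    refine ae_of_all _ fun y => ?_
    by_cases hy : dil n t f y = 0
    · simp only [hy, mul_zero, norm_zero]
      positivity
    · have hyt : ‖y‖ ≤ t := dil_supp hsupp ht hy
      rw [Real.norm_eq_abs, abs_mul, abs_of_nonneg (hd_nonneg y)]
      exact mul_le_mul_of_nonneg_right (hKbd y hyt) (hd_nonneg y)
  have h2 : Integrable (fun y => (Ω x / ‖x‖ ^ ((n:ℝ)-α)) * dil n t f y) :=
    hd_int.const_mul _
  -- rewrite difference as a single integral
  have hsub : fracInt n α Ω (dil n t f) x - Ω x / ‖x‖ ^ ((n:ℝ)-α)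
      = ∫ y, (Ω (x - y) / ‖x - y‖ ^ ((n:ℝ)-α) - Ω x / ‖x‖ ^ ((n:ℝ)-α)) * dil n t f y := by
    have e : (fun y => (Ω (x - y) / ‖x - y‖ ^ ((n:ℝ)-α) - Ω x / ‖x‖ ^ ((n:ℝ)-α)) * dil n t f y)
        = fun y => (Ω (x - y) / ‖x - y‖ ^ ((n:ℝ)-α)) * dil n t f y
          - (Ω x / ‖x‖ ^ ((n:ℝ)-α)) * dil n t f y := by
      funext y; ring
    rw [e, integral_sub h1 h2, integral_const_mul, dil_integral hf ht hnorm, mul_one]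
    rfl
  rw [hsub]
  have hbd : ∀ y : Eucl n,
      ‖(Ω (x - y) / ‖x - y‖ ^ ((n:ℝ)-α) - Ω x / ‖x‖ ^ ((n:ℝ)-α)) * dil n t f y‖
        ≤ (C * t * ‖x‖^(α-(n:ℝ))) * dil n t f y := by
    intro y
    by_cases hy : dil n t f y = 0
    · simp only [hy, mul_zero, norm_zero]; exact le_refl 0
    · have hyt : ‖y‖ ≤ t := dil_supp hsupp ht hy
      rw [Real.norm_eq_abs, abs_mul, abs_of_nonneg (hd_nonneg y)]
      refine mul_le_mul_of_nonneg_right ?_ (hd_nonneg y)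
      have hk := kernel_diff hα hαn hhom hB hL hL0 hB0 hρ hx (hyt.trans ht2)
      refine hk.trans ?_
      exact mul_le_mul_of_nonneg_right (mul_le_mul_of_nonneg_left hyt hC0) hxβ.le
  rw [← Real.norm_eq_abs]
  refine (norm_integral_le_of_norm_le (hd_int.const_mul _) (ae_of_all _ hbd)).trans ?_
  rw [integral_const_mul, dil_integral hf ht hnorm, mul_one]
end

theorem stmt9 (n : ℕ) (α : ℝ) (hα : 0 < α) (hαn : α < n)
    (Ω : Eucl n → ℝ) (B L : ℝ) (hmeas : Measurable Ω) (hhom : Homog n Ω)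
    (hB : ∀ u ∈ sphere (0 : Eucl n) 1, |Ω u| ≤ B)
    (hL : ∀ u ∈ sphere (0 : Eucl n) 1, ∀ v ∈ sphere (0 : Eucl n) 1,
      |Ω u - Ω v| ≤ L * ‖u - v‖)
    (f : Eucl n → ℝ) (hf : Integrable f) (hpos : ∀ y, 0 ≤ f y)
    (hsupp : Function.support f ⊆ closedBall (0 : Eucl n) 1)
    (hnorm : (∫ y, f y) = 1) :
    ∀ ρ > (0:ℝ),
      Tendsto (fun t : ℝ => wnormSet volume ((n:ℝ)/((n:ℝ)-α)) ((ball (0 : Eucl n) ρ)ᶜ)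
          (fun x => (‖fracInt n α Ω (dil n t f) x - Ω x / ‖x‖ ^ ((n:ℝ) - α)‖₊ : ℝ≥0∞)))
        (nhdsWithin 0 (Ioi 0)) (nhds 0) := by
  intro ρ hρ
  have hn : (0:ℝ) < n := hα.trans hαn
  have hnαpos : (0:ℝ) < (n:ℝ) - α := sub_pos.2 hαn
  have hnpos : 0 < n := by exact_mod_cast hn
  -- B and L are nonnegative
  set u₀ : Eucl n := EuclideanSpace.single (⟨0, hnpos⟩ : Fin n) (1:ℝ) with hu₀
  have hu₀s : u₀ ∈ sphere (0:Eucl n) 1 := by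
    rw [mem_sphere_zero_iff_norm, hu₀, EuclideanSpace.norm_single]; norm_num
  have hu₀s' : -u₀ ∈ sphere (0:Eucl n) 1 := by
    rw [mem_sphere_zero_iff_norm, norm_neg, hu₀, EuclideanSpace.norm_single]; norm_num
  have hB0 : 0 ≤ B := (abs_nonneg _).trans (hB u₀ hu₀s)
  have hL0 : 0 ≤ L := by
    have hLL := hL u₀ hu₀s (-u₀) hu₀s'
    have h2 : ‖u₀ - -u₀‖ = 2 := by
      rw [sub_neg_eq_add, ← two_smul ℝ u₀, norm_smul]
      have : ‖u₀‖ = 1 := mem_sphere_zero_iff_norm.1 hu₀s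
      rw [this]; norm_num
    rw [h2] at hLL
    nlinarith [abs_nonneg (Ω u₀ - Ω (-u₀))]
  set C₀ : ℝ := (B * ((n:ℝ)-α) * 2^(1-(α-(n:ℝ))) + 4*L)/ρ with hC₀
  set C : ℝ := C₀ + 1 with hC
  have hC₀0 : 0 ≤ C₀ := by
    apply div_nonneg _ hρ.le
    have h2p : (0:ℝ) ≤ 2^(1-(α-(n:ℝ))) := (Real.rpow_pos_of_pos (by norm_num) _).le
    have h4 := mul_nonneg (mul_nonneg hB0 hnαpos.le) h2p
    linarith
  have hCpos : 0 < C := by linarith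
  set e : ℝ := ((n:ℝ)-α)/(n:ℝ) with he
  have he0 : 0 < e := div_pos hnαpos hn
  set v₁ : ℝ≥0∞ := volume (ball (0:Eucl n) 1) with hv₁
  have hv₁top : v₁ ≠ ⊤ := measure_ball_lt_top.ne
  have hexp : 1/((n:ℝ)/((n:ℝ)-α)) = e := one_div_div _ _
  -- the key bound for small t
  have key : ∀ t ∈ Ioo (0:ℝ) (ρ/2),
      wnormSet volume ((n:ℝ)/((n:ℝ)-α)) ((ball (0 : Eucl n) ρ)ᶜ)
          (fun x => (‖fracInt n α Ω (dil n t f) x - Ω x / ‖x‖ ^ ((n:ℝ) - α)‖₊ : ℝ≥0∞))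
        ≤ ENNReal.ofReal (C*t) * v₁ ^ e := by
    rintro t ⟨ht, ht2⟩
    have hCt : 0 < C * t := mul_pos hCpos ht
    refine iSup_le fun l => ?_
    rcases eq_or_ne l 0 with rfl | hl
    · simp
    have hlpos : (0:ℝ) < (l:ℝ) := by positivity
    set r : ℝ := (C*t/(l:ℝ)) ^ (((n:ℝ)-α)⁻¹) with hr
    have hrpos : 0 < r := Real.rpow_pos_of_pos (div_pos hCt hlpos) _
    have hrpow : r ^ ((n:ℝ)-α) = C*t/(l:ℝ)  := by
      rw [hr, ← Real.rpow_mul (div_pos hCt hlpos).le, inv_mul_cancel₀ hnαpos.ne', Real.rpow_one]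
    -- the superlevel set is inside the ball of radius r
    have hsub : {x : Eucl n | x ∈ (ball (0 : Eucl n) ρ)ᶜ ∧
        (l : ℝ≥0∞) < (‖fracInt n α Ω (dil n t f) x - Ω x / ‖x‖ ^ ((n:ℝ) - α)‖₊ : ℝ≥0∞)}
        ⊆ ball (0:Eucl n) r := by
      rintro x ⟨hx1, hx2⟩
      have hxρ : ρ ≤ ‖x‖ := by
        rw [mem_compl_iff, mem_ball_zero_iff, not_lt] at hx1; exact hx1
      have hx0 : (0:ℝ) < ‖x‖ := lt_of_lt_of_le hρ hxρ
      have habs : |fracInt n α Ω (dil n t f) x - Ω x / ‖x‖ ^ ((n:ℝ) - α)|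
          ≤ C * t * ‖x‖ ^ (α - (n:ℝ)) := by
        refine (approx_bound hα hαn hmeas hhom hB hL hL0 hB0 hf hpos hsupp hnorm hρ ht
          ht2.le hxρ).trans ?_
        have : (0:ℝ) ≤ t * ‖x‖ ^ (α - (n:ℝ)) :=
          mul_nonneg ht.le (Real.rpow_pos_of_pos hx0 _).le
        rw [hC]
        nlinarith
      have hlt : (l:ℝ) < C * t * ‖x‖ ^ (α - (n:ℝ)) := by
        have h3 : (l:ℝ≥0∞) < ENNReal.ofReal (C * t * ‖x‖ ^ (α - (n:ℝ))) := by
          refine lt_of_lt_of_le hx2 ?_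
          rw [← enorm_eq_nnnorm, ← ofReal_norm, Real.norm_eq_abs]
          exact ENNReal.ofReal_le_ofReal habs
        rw [← ENNReal.ofReal_coe_nnreal] at h3
        exact (ENNReal.ofReal_lt_ofReal_iff_of_nonneg l.coe_nonneg).1 h3
      -- deduce ‖x‖ < r
      have hxβ : ‖x‖ ^ (α - (n:ℝ)) = (‖x‖ ^ ((n:ℝ)-α))⁻¹ := by
        rw [show α - (n:ℝ) = -((n:ℝ)-α) by ring, Real.rpow_neg (norm_nonneg _)]
      have hxpow : ‖x‖ ^ ((n:ℝ)-α) < C*t/(l:ℝ) := by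
        rw [hxβ] at hlt
        have hxp : (0:ℝ) < ‖x‖ ^ ((n:ℝ)-α) := Real.rpow_pos_of_pos hx0 _
        rw [lt_div_iff₀ hlpos]
        calc ‖x‖ ^ ((n:ℝ)-α) * (l:ℝ) < ‖x‖ ^ ((n:ℝ)-α) * (C * t * (‖x‖ ^ ((n:ℝ)-α))⁻¹) := by
              exact mul_lt_mul_of_pos_left hlt hxp
          _ = C * t := by field_simp
      rw [mem_ball_zero_iff]
      by_contra hcon
      push_neg at hcon
      have := Real.rpow_le_rpow hrpos.le hcon hnαpos.le
      rw [hrpow] at this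
      linarith
    -- measure estimate
    have hmeasball : volume (ball (0:Eucl n) r) = ENNReal.ofReal (r ^ n) * v₁ := by
      rw [hv₁, Measure.addHaar_ball_of_pos volume _ hrpos, finrank_euclideanSpace_fin]
    have hle : volume {x : Eucl n | x ∈ (ball (0 : Eucl n) ρ)ᶜ ∧ (l : ℝ≥0∞) < (‖fracInt n α Ω (dil n t f) x - Ω x / ‖x‖ ^ ((n:ℝ) - α)‖₊ : ℝ≥0∞)} ≤ volume (ball (0:Eucl n) r) := measure_mono hsub
    rw [hmeasball] at hle
    rw [hexp]
    calc (l:ℝ≥0∞) * (volume {x : Eucl n | x ∈ (ball (0 : Eucl n) ρ)ᶜ ∧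
        (l : ℝ≥0∞) < (‖fracInt n α Ω (dil n t f) x - Ω x / ‖x‖ ^ ((n:ℝ) - α)‖₊ : ℝ≥0∞)}) ^ e
        ≤ (l:ℝ≥0∞) * (ENNReal.ofReal (r ^ n) * v₁) ^ e := by
          gcongr
      _ = (l:ℝ≥0∞) * (ENNReal.ofReal (r ^ n)) ^ e * v₁ ^ e := by
          rw [ENNReal.mul_rpow_of_nonneg _ _ he0.le, mul_assoc]
      _ = ENNReal.ofReal (C*t) * v₁ ^ e := by
          congr 1
          have h5 : (ENNReal.ofReal (r ^ n)) ^ e = ENNReal.ofReal (C*t/(l:ℝ)) := by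
            rw [← Real.rpow_natCast r n,
              ENNReal.ofReal_rpow_of_pos (Real.rpow_pos_of_pos hrpos _),
              ← Real.rpow_mul hrpos.le]
            congr 1
            rw [he, show (n:ℝ) * (((n:ℝ)-α)/(n:ℝ)) = (n:ℝ)-α by field_simp]
            exact hrpow
          rw [h5, ENNReal.ofReal_div_of_pos hlpos, ENNReal.ofReal_coe_nnreal]
          exact ENNReal.mul_div_cancel (by exact_mod_cast hl) ENNReal.coe_ne_top
  -- squeeze
  have hM : Tendsto (fun t:ℝ => ENNReal.ofReal (C*t) * v₁ ^ e) (nhdsWithin 0 (Ioi 0)) (nhds 0) := by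
    have h1 : Tendsto (fun t:ℝ => C*t) (nhdsWithin 0 (Ioi 0)) (nhds 0) := by
      have hco : Continuous (fun t:ℝ => C*t) := continuous_const.mul continuous_id
      have := (hco.tendsto (0:ℝ)).mono_left (nhdsWithin_le_nhds (s := Ioi (0:ℝ)))
      simpa using this
    have h2 : Tendsto (fun t:ℝ => ENNReal.ofReal (C*t)) (nhdsWithin 0 (Ioi 0)) (nhds 0) := by
      have := (ENNReal.continuous_ofReal.tendsto 0).comp h1
      simpa [Function.comp_def] using this
    have h3 := ENNReal.Tendsto.mul_const h2
      (Or.inr (ENNReal.rpow_ne_top_of_nonneg he0.le hv₁top))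
    simpa using h3
  refine tendsto_of_tendsto_of_tendsto_of_le_of_le' tendsto_const_nhds hM ?_ ?_
  · exact Eventually.of_forall fun t => zero_le
  · filter_upwards [Ioo_mem_nhdsGT_of_mem (⟨le_rfl, half_pos hρ⟩ : (0:ℝ) ∈ Ico 0 (ρ/2))] with t ht
    exact key t ht
end
end

section
/- Let $0<\alpha<n$ and let $\Omega$ be homogeneous of degree zero, bounded and Lipschitz on $\mathbb{S}^{n-1}$. Suppose $T_{\Omega}^{\alpha}$ is bounded from $L^1(\mathbb{R}^n)$ to $L^{n/(n-\alpha),\infty}(\mathbb{R}^n)$ with norm $A$. Then $\|\Omega\|_{L^{n/(n-\alpha)}(\mathbb{S}^{n-1})}\le C(n,\alpha)\,A$. -/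
open MeasureTheory Metric Set ENNReal Filter

noncomputable section

/-! ### Auxiliary lemmas -/

section Aux

lemma normalize_sub_le {E : Type*} [NormedAddCommGroup E] [NormedSpace ℝ E]
    (a b : E) (ha : a ≠ 0) (hb : b ≠ 0) :
    ‖‖a‖⁻¹ • a - ‖b‖⁻¹ • b‖ ≤ 2 * ‖a - b‖ / ‖a‖ := by
  have ha' : (0:ℝ) < ‖a‖ := norm_pos_iff.2 ha
  have hb' : (0:ℝ) < ‖b‖ := norm_pos_iff.2 hb
  have key : ‖a‖⁻¹ • a - ‖b‖⁻¹ • b = ‖a‖⁻¹ • (a - b) + (‖a‖⁻¹ - ‖b‖⁻¹) • b := by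
    rw [smul_sub, sub_smul]; abel
  rw [key]
  have h1 : ‖‖a‖⁻¹ • (a - b)‖ = ‖a - b‖ / ‖a‖ := by
    rw [norm_smul, norm_inv, norm_norm, div_eq_inv_mul]
  have h2 : ‖(‖a‖⁻¹ - ‖b‖⁻¹) • b‖ ≤ ‖a - b‖ / ‖a‖ := by
    rw [norm_smul, Real.norm_eq_abs]
    have heq : ‖a‖⁻¹ - ‖b‖⁻¹ = (‖b‖ - ‖a‖) / (‖a‖ * ‖b‖) := by
      field_simp
    rw [heq, abs_div, abs_of_pos (by positivity : (0:ℝ) < ‖a‖ * ‖b‖)]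
    have h3 : |‖b‖ - ‖a‖| ≤ ‖a - b‖ := by
      have := abs_norm_sub_norm_le b a
      rwa [norm_sub_rev] at this
    rw [div_mul_eq_mul_div, div_le_div_iff₀ (by positivity) ha']
    calc |‖b‖ - ‖a‖| * ‖b‖ * ‖a‖ ≤ ‖a - b‖ * ‖b‖ * ‖a‖ := by
          gcongr
      _ = ‖a - b‖ * (‖a‖ * ‖b‖) := by ring
  calc ‖‖a‖⁻¹ • (a - b) + (‖a‖⁻¹ - ‖b‖⁻¹) • b‖
      ≤ ‖‖a‖⁻¹ • (a - b)‖ + ‖(‖a‖⁻¹ - ‖b‖⁻¹) • b‖ := norm_add_le _ _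
    _ ≤ ‖a - b‖ / ‖a‖ + ‖a - b‖ / ‖a‖ := by rw [h1]; linarith
    _ = 2 * ‖a - b‖ / ‖a‖ := by ring

lemma rpow_near_one {β : ℝ} (hβ : β < 0) {u : ℝ} (hu : u ∈ Icc (1/2 : ℝ) (3/2)) :
    |u ^ β - 1| ≤ |β| * 2 ^ (1 - β) * |u - 1| := by
  have hder : ∀ w ∈ Icc (1/2 : ℝ) (3/2),
      HasDerivWithinAt (fun w : ℝ => w ^ β) (β * w ^ (β - 1)) (Icc (1/2 : ℝ) (3/2)) w := by
    intro w hw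
    exact (Real.hasDerivAt_rpow_const (Or.inl (by linarith [hw.1]))).hasDerivWithinAt
  have hbound : ∀ w ∈ Icc (1/2 : ℝ) (3/2), ‖β * w ^ (β - 1)‖ ≤ |β| * 2 ^ (1 - β) := by
    intro w hw
    rw [Real.norm_eq_abs, abs_mul]
    have hw0 : (0:ℝ) < w := by linarith [hw.1]
    rw [abs_of_pos (Real.rpow_pos_of_pos hw0 _)]
    have h1 : w ^ (β - 1) ≤ (1/2 : ℝ) ^ (β - 1) :=
      Real.rpow_le_rpow_of_nonpos (by norm_num) hw.1 (by linarith)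
    have h2 : ((1:ℝ)/2) ^ (β - 1) = 2 ^ (1 - β) := by
      rw [one_div, Real.inv_rpow (by norm_num : (0:ℝ) ≤ 2),
        ← Real.rpow_neg (by norm_num : (0:ℝ) ≤ 2), neg_sub]
    rw [h2] at h1
    exact mul_le_mul_of_nonneg_left h1 (abs_nonneg β)
  have h := (convex_Icc (1/2 : ℝ) (3/2)).norm_image_sub_le_of_norm_hasDerivWithin_le
    hder hbound (by norm_num : (1:ℝ) ∈ Icc (1/2 : ℝ) (3/2)) hu
  simpa [Real.one_rpow, Real.norm_eq_abs] using h

lemma rpow_diff_le {β s t : ℝ} (hβ : β < 0) (ht : 0 < t) (hst : |s - t| ≤ t / 2) :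
    |s ^ β - t ^ β| ≤ |β| * 2 ^ (1 - β) * (|s - t| / t) * t ^ β := by
  have hs : t / 2 ≤ s := by
    rcases abs_sub_le_iff.1 hst with ⟨h1, h2⟩; linarith
  have hs0 : 0 < s := lt_of_lt_of_le (by linarith) hs
  have hu : s / t ∈ Icc (1/2 : ℝ) (3/2) := by
    constructor
    · rw [le_div_iff₀ ht]; linarith
    · rw [div_le_iff₀ ht]
      rcases abs_sub_le_iff.1 hst with ⟨h1, h2⟩; linarith
  have h := rpow_near_one hβ hu
  have hdiv : (s / t) ^ β = s ^ β / t ^ β := Real.div_rpow hs0.le ht.le β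
  have htβ : (0:ℝ) < t ^ β := Real.rpow_pos_of_pos ht β
  have key : |s ^ β - t ^ β| = |(s / t) ^ β - 1| * t ^ β := by
    rw [hdiv]
    rw [show s ^ β / t ^ β - 1 = (s ^ β - t ^ β) / t ^ β by field_simp]
    rw [abs_div, abs_of_pos htβ, div_mul_cancel₀ _ htβ.ne']
  rw [key]
  have hst' : |s / t - 1| = |s - t| / t := by
    rw [show s / t - 1 = (s - t) / t by field_simp, abs_div, abs_of_pos ht]
  calc |(s / t) ^ β - 1| * t ^ β ≤ (|β| * 2 ^ (1 - β) * |s / t - 1|) * t ^ β := by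
        gcongr
    _ = |β| * 2 ^ (1 - β) * (|s - t| / t) * t ^ β := by rw [hst']

lemma ker_est (n : ℕ) (α : ℝ) (hα : 0 < α) (hαn : α < n) (Ω : Eucl n → ℝ) (B L : ℝ)
    (hB0 : 0 ≤ B) (hL0 : 0 ≤ L) (hhom : Homog n Ω)
    (hB : ∀ u ∈ sphere (0 : Eucl n) 1, |Ω u| ≤ B)
    (hL : ∀ u ∈ sphere (0 : Eucl n) 1, ∀ v ∈ sphere (0 : Eucl n) 1,
      |Ω u - Ω v| ≤ L * ‖u - v‖)
    {δ : ℝ} (hδ0 : 0 < δ) (hδ : δ ≤ 1 / 2) {x y : Eucl n} (hx : x ≠ 0)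
    (hy : ‖y‖ ≤ δ * ‖x‖) :
    |Ω (x - y) * ‖x - y‖ ^ (α - (n : ℝ)) - Ω x * ‖x‖ ^ (α - (n : ℝ))| ≤
      2 ^ (n + 2) * (L + B * n) * δ * ‖x‖ ^ (α - (n : ℝ)) := by
  set β : ℝ := α - (n : ℝ) with hβdef
  have hβ : β < 0 := by rw [hβdef]; linarith
  have ht : (0:ℝ) < ‖x‖ := norm_pos_iff.2 hx
  have hyt : ‖y‖ ≤ ‖x‖ / 2 := le_trans hy (by nlinarith)
  have hslow : ‖x‖ / 2 ≤ ‖x - y‖ := by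
    have := norm_sub_norm_le x y
    linarith
  have hs0 : (0:ℝ) < ‖x - y‖ := lt_of_lt_of_le (by linarith) hslow
  have hxy : x - y ≠ 0 := norm_pos_iff.1 hs0
  have hst : |‖x - y‖ - ‖x‖| ≤ ‖y‖ := by
    have h1 := abs_norm_sub_norm_le (x - y) x
    simpa using h1
  have hu : (‖x - y‖⁻¹ • (x - y)) ∈ sphere (0 : Eucl n) 1 := by
    rw [mem_sphere_zero_iff_norm, norm_smul, norm_inv, norm_norm,
      inv_mul_cancel₀ hs0.ne']
  have hv : (‖x‖⁻¹ • x) ∈ sphere (0 : Eucl n) 1 := by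
    rw [mem_sphere_zero_iff_norm, norm_smul, norm_inv, norm_norm,
      inv_mul_cancel₀ ht.ne']
  have hΩu : Ω (‖x - y‖⁻¹ • (x - y)) = Ω (x - y) := hhom _ (inv_pos.2 hs0) _ hxy
  have hΩv : Ω (‖x‖⁻¹ • x) = Ω x := hhom _ (inv_pos.2 ht) _ hx
  have hnormdiff : ‖‖x - y‖⁻¹ • (x - y) - ‖x‖⁻¹ • x‖ ≤ 4 * δ := by
    have h1 := normalize_sub_le (x - y) x hxy hx
    have h2 : ‖x - y - x‖ = ‖y‖ := by simp
    rw [h2] at h1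
    refine h1.trans ?_
    rw [div_le_iff₀ hs0]
    nlinarith
  have hΩdiff : |Ω (x - y) - Ω x| ≤ 4 * L * δ := by
    rw [← hΩu, ← hΩv]
    calc |Ω (‖x - y‖⁻¹ • (x - y)) - Ω (‖x‖⁻¹ • x)|
        ≤ L * ‖‖x - y‖⁻¹ • (x - y) - ‖x‖⁻¹ • x‖ := hL _ hu _ hv
      _ ≤ L * (4 * δ) := mul_le_mul_of_nonneg_left hnormdiff hL0
      _ = 4 * L * δ := by ring
  have hΩxb : |Ω x| ≤ B := by rw [← hΩv]; exact hB _ hv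
  have tβpos : (0:ℝ) < ‖x‖ ^ β := Real.rpow_pos_of_pos ht β
  have sβpos : (0:ℝ) < ‖x - y‖ ^ β := Real.rpow_pos_of_pos hs0 β
  have h2n : (0:ℝ) < 2 ^ n := by positivity
  have hsβ : ‖x - y‖ ^ β ≤ 2 ^ n * ‖x‖ ^ β := by
    have h1 : ‖x - y‖ ^ β ≤ (‖x‖ / 2) ^ β :=
      Real.rpow_le_rpow_of_nonpos (by positivity) hslow hβ.le
    have h2 : (‖x‖ / 2) ^ β = ‖x‖ ^ β * 2 ^ (-β) := by
      rw [div_eq_mul_inv, Real.mul_rpow ht.le (by norm_num),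
        Real.inv_rpow (by norm_num), ← Real.rpow_neg (by norm_num)]
    have h3 : (2:ℝ) ^ (-β) ≤ 2 ^ ((n:ℝ)) :=
      Real.rpow_le_rpow_of_exponent_le one_le_two (by rw [hβdef]; linarith)
    have h4 : (2:ℝ) ^ ((n:ℝ)) = 2 ^ n := Real.rpow_natCast 2 n
    calc ‖x - y‖ ^ β ≤ (‖x‖ / 2) ^ β := h1
      _ = ‖x‖ ^ β * 2 ^ (-β) := h2
      _ ≤ ‖x‖ ^ β * 2 ^ n := by rw [← h4]; exact mul_le_mul_of_nonneg_left h3 tβpos.le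
      _ = 2 ^ n * ‖x‖ ^ β := by ring
  have hrdiff : |‖x - y‖ ^ β - ‖x‖ ^ β| ≤ (n:ℝ) * 2 ^ (n+1) * δ * ‖x‖ ^ β := by
    have h := rpow_diff_le hβ ht (le_trans hst hyt)
    have hb1 : |β| ≤ (n:ℝ) := by
      rw [abs_of_neg hβ, hβdef]; linarith
    have hb2 : (2:ℝ) ^ (1 - β) ≤ 2 ^ (n+1) := by
      have h5 : (2:ℝ) ^ (1 - β) ≤ 2 ^ (((n:ℝ)+1)) :=
        Real.rpow_le_rpow_of_exponent_le one_le_two (by rw [hβdef]; linarith)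
      have h6 : (2:ℝ) ^ (((n:ℝ)+1)) = 2 ^ (n+1) := by
        rw [show ((n:ℝ)+1) = ((n+1 : ℕ) : ℝ) by push_cast; ring, Real.rpow_natCast]
      linarith [h5, h6.le, h6.ge]
    have hb3 : |‖x - y‖ - ‖x‖| / ‖x‖ ≤ δ := by
      rw [div_le_iff₀ ht]
      calc |‖x - y‖ - ‖x‖| ≤ ‖y‖ := hst
        _ ≤ δ * ‖x‖ := hy
    refine h.trans ?_
    have hmain : |β| * 2 ^ (1 - β) * (|‖x - y‖ - ‖x‖| / ‖x‖) ≤ (n:ℝ) * 2 ^ (n+1) * δ := by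
      have p1 : (0:ℝ) ≤ |β| := abs_nonneg _
      have p2 : (0:ℝ) < (2:ℝ) ^ (1 - β) := Real.rpow_pos_of_pos (by norm_num) _
      have p3 : (0:ℝ) ≤ |‖x - y‖ - ‖x‖| / ‖x‖ := by positivity
      have p4 : (0:ℝ) < (2:ℝ) ^ (n+1) := by positivity
      calc |β| * 2 ^ (1 - β) * (|‖x - y‖ - ‖x‖| / ‖x‖)
          ≤ (n:ℝ) * 2 ^ (n+1) * (|‖x - y‖ - ‖x‖| / ‖x‖) := by
            apply mul_le_mul_of_nonneg_right _ p3
            exact mul_le_mul hb1 hb2 p2.le (Nat.cast_nonneg n)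
        _ ≤ (n:ℝ) * 2 ^ (n+1) * δ := by
            apply mul_le_mul_of_nonneg_left hb3 (by positivity)
    exact mul_le_mul_of_nonneg_right hmain tβpos.le
  have key : Ω (x - y) * ‖x - y‖ ^ β - Ω x * ‖x‖ ^ β
      = (Ω (x - y) - Ω x) * ‖x - y‖ ^ β + Ω x * (‖x - y‖ ^ β - ‖x‖ ^ β) := by ring
  rw [key]
  calc |(Ω (x - y) - Ω x) * ‖x - y‖ ^ β + Ω x * (‖x - y‖ ^ β - ‖x‖ ^ β)|
      ≤ |(Ω (x - y) - Ω x) * ‖x - y‖ ^ β| + |Ω x * (‖x - y‖ ^ β - ‖x‖ ^ β)| := abs_add_le _ _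
    _ = |Ω (x - y) - Ω x| * ‖x - y‖ ^ β + |Ω x| * |‖x - y‖ ^ β - ‖x‖ ^ β| := by
        rw [abs_mul, abs_mul, abs_of_pos sβpos]
    _ ≤ (4 * L * δ) * (2 ^ n * ‖x‖ ^ β) + B * ((n:ℝ) * 2 ^ (n+1) * δ * ‖x‖ ^ β) := by
        apply add_le_add
        · exact mul_le_mul hΩdiff hsβ sβpos.le (by positivity)
        · exact mul_le_mul hΩxb hrdiff (abs_nonneg _) hB0
    _ ≤ 2 ^ (n + 2) * (L + B * n) * δ * ‖x‖ ^ β := by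
        have e1 : (2:ℝ) ^ (n+1) = 2 * 2 ^ n := by ring
        have e2 : (2:ℝ) ^ (n+2) = 4 * 2 ^ n := by ring
        rw [e1, e2]
        nlinarith [mul_nonneg (mul_nonneg hB0 (Nat.cast_nonneg n : (0:ℝ) ≤ n)) hδ0.le,
          mul_pos h2n tβpos, mul_nonneg hB0 (Nat.cast_nonneg n : (0:ℝ) ≤ n)]

lemma slice_meas (n : ℕ) (hn : 0 < n) (α : ℝ) (hα : 0 < α) (hαn : α < (n:ℝ)) (c : ℝ) :
    Measure.volumeIoiPow (n - 1) {r : Ioi (0:ℝ) | 1 < c * (r:ℝ) ^ (α - (n:ℝ))} =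
      ENNReal.ofReal ((max c 0) ^ ((n:ℝ)/((n:ℝ)-α)) / n) := by
  have hna : (0:ℝ) < (n:ℝ) - α := sub_pos.2 hαn
  have hβ : α - (n:ℝ) < 0 := by linarith
  have hq0 : (0:ℝ) < (n:ℝ)/((n:ℝ)-α) := div_pos (by exact_mod_cast hn) hna
  rcases le_or_gt c 0 with hc | hc
  · have hset : {r : Ioi (0:ℝ) | 1 < c * (r:ℝ) ^ (α - (n:ℝ))} = ∅ := by
      ext r
      simp only [mem_setOf_eq, mem_empty_iff_false, iff_false, not_lt]
      have hr : (0:ℝ) < (r:ℝ) ^ (α - (n:ℝ)) := Real.rpow_pos_of_pos r.2 _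
      nlinarith
    rw [hset, measure_empty, max_eq_right hc, Real.zero_rpow hq0.ne', zero_div,
      ENNReal.ofReal_zero]
  · set R : ℝ := c ^ (((n:ℝ) - α)⁻¹) with hR
    have hR0 : 0 < R := Real.rpow_pos_of_pos hc _
    have hRβ : R ^ (α - (n:ℝ)) = c⁻¹ := by
      rw [hR, ← Real.rpow_mul hc.le]
      have harith : ((n:ℝ) - α)⁻¹ * (α - (n:ℝ)) = -1 := by
        field_simp; ring
      rw [harith, Real.rpow_neg_one]
    have hset : {r : Ioi (0:ℝ) | 1 < c * (r:ℝ) ^ (α - (n:ℝ))} = Iio (⟨R, hR0⟩ : Ioi (0:ℝ)) := by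
      ext r
      simp only [mem_setOf_eq, mem_Iio, ← Subtype.coe_lt_coe]
      have hr0 : (0:ℝ) < (r:ℝ) := r.2
      have hiff : (1 < c * (r:ℝ) ^ (α - (n:ℝ))) ↔ c⁻¹ < (r:ℝ) ^ (α - (n:ℝ)) := by
        rw [← div_lt_iff₀' hc, one_div]
      rw [hiff, ← hRβ]
      exact Real.rpow_lt_rpow_iff_of_neg hR0 hr0 hβ
    rw [hset, Measure.volumeIoiPow_apply_Iio]
    congr 1
    rw [max_eq_left hc.le]
    have hnn : n - 1 + 1 = n := Nat.succ_pred_eq_of_pos hn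
    have hcast : ((n - 1 : ℕ) : ℝ) + 1 = (n:ℝ) := by
      rw [Nat.cast_sub hn]; push_cast; ring
    rw [hnn, hcast]
    congr 1
    show R ^ n = c ^ ((n:ℝ)/((n:ℝ)-α))
    rw [hR, ← Real.rpow_natCast (c ^ (((n:ℝ) - α)⁻¹)) n, ← Real.rpow_mul hc.le]
    congr 1
    field_simp

lemma measure_polar (n : ℕ) (α : ℝ) (hα : 0 < α) (hαn : α < (n:ℝ)) (Ω : Eucl n → ℝ)
    (hΩ : Measurable Ω) (hhom : Homog n Ω) (a : ℝ) :
    volume {x : Eucl n | x ≠ 0 ∧ 1 < (|Ω x| - a) * ‖x‖ ^ (α - (n : ℝ))} =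
      (∫⁻ θ : sphere (0 : Eucl n) 1,
        ENNReal.ofReal (max (|Ω (θ : Eucl n)| - a) 0 ^ ((n:ℝ)/((n:ℝ)-α)))
        ∂((volume : Measure (Eucl n)).toSphere)) / (n : ℝ≥0∞) := by
  have hn : 0 < n := by exact_mod_cast hα.trans hαn
  set T : Set (sphere (0 : Eucl n) 1 × Ioi (0:ℝ)) :=
    {p | 1 < (|Ω (p.1 : Eucl n)| - a) * (p.2 : ℝ) ^ (α - (n:ℝ))} with hT_def
  have hTmeas : MeasurableSet T := by
    apply measurableSet_lt measurable_const
    exact (((hΩ.comp (measurable_subtype_coe.comp measurable_fst)).abs.sub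
      measurable_const).mul ((measurable_subtype_coe.comp measurable_snd).pow_const _))
  have hmp := (volume : Measure (Eucl n)).measurePreserving_homeomorphUnitSphereProd
  have hdim : Module.finrank ℝ (Eucl n) = n := finrank_euclideanSpace_fin
  rw [hdim] at hmp
  have hsub : {x : Eucl n | x ≠ 0 ∧ 1 < (|Ω x| - a) * ‖x‖ ^ (α - (n : ℝ))} ⊆
      ({0}ᶜ : Set (Eucl n)) := fun x hx => hx.1
  have hpre : ((Subtype.val : ({0}ᶜ : Set (Eucl n)) → Eucl n) ⁻¹'
      {x : Eucl n | x ≠ 0 ∧ 1 < (|Ω x| - a) * ‖x‖ ^ (α - (n : ℝ))}) =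
      (homeomorphUnitSphereProd (Eucl n)) ⁻¹' T := by
    ext z
    obtain ⟨x, hx⟩ := z
    have hx0 : x ≠ 0 := hx
    have ht : (0:ℝ) < ‖x‖ := norm_pos_iff.2 hx0
    simp only [mem_preimage, mem_setOf_eq, hT_def,
      homeomorphUnitSphereProd_apply_fst_coe, homeomorphUnitSphereProd_apply_snd_coe]
    rw [hhom ‖x‖⁻¹ (inv_pos.2 ht) x hx0]
    simp [hx0]
  calc volume {x : Eucl n | x ≠ 0 ∧ 1 < (|Ω x| - a) * ‖x‖ ^ (α - (n : ℝ))}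
      = Measure.comap Subtype.val volume ((homeomorphUnitSphereProd (Eucl n)) ⁻¹' T) := by
        rw [← hpre, comap_subtype_coe_apply (measurableSet_singleton (0 : Eucl n)).compl,
          Subtype.image_preimage_coe, inter_eq_self_of_subset_right hsub]
    _ = (volume : Measure (Eucl n)).toSphere.prod (Measure.volumeIoiPow (n - 1)) T :=
        hmp.measure_preimage hTmeas.nullMeasurableSet
    _ = ∫⁻ θ, Measure.volumeIoiPow (n-1) (Prod.mk θ ⁻¹' T)
          ∂((volume : Measure (Eucl n)).toSphere) := Measure.prod_apply hTmeas
    _ = ∫⁻ θ : sphere (0 : Eucl n) 1,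
          ENNReal.ofReal (max (|Ω (θ : Eucl n)| - a) 0 ^ ((n:ℝ)/((n:ℝ)-α)) / n)
          ∂((volume : Measure (Eucl n)).toSphere) := by
        refine lintegral_congr fun θ => ?_
        have hTslice : Prod.mk θ ⁻¹' T =
            {r : Ioi (0:ℝ) | 1 < (|Ω (θ : Eucl n)| - a) * (r:ℝ) ^ (α - (n:ℝ))} := rfl
        rw [hTslice, slice_meas n hn α hα hαn]
    _ = (∫⁻ θ : sphere (0 : Eucl n) 1,
          ENNReal.ofReal (max (|Ω (θ : Eucl n)| - a) 0 ^ ((n:ℝ)/((n:ℝ)-α)))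
          ∂((volume : Measure (Eucl n)).toSphere)) / (n : ℝ≥0∞) := by
        have hinv : ∀ z : ℝ, 0 ≤ z → ENNReal.ofReal (z / n) =
            ENNReal.ofReal z * ((n : ℝ≥0∞))⁻¹ := by
          intro z hz
          rw [div_eq_mul_inv, ENNReal.ofReal_mul hz,
            ENNReal.ofReal_inv_of_pos (by exact_mod_cast hn), ENNReal.ofReal_natCast]
        rw [ENNReal.div_eq_inv_mul,
          ← lintegral_const_mul' _ _ (ENNReal.inv_ne_top.2 (by exact_mod_cast hn.ne'))]
        refine lintegral_congr fun θ => ?_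
        rw [hinv _ (by positivity), mul_comm]

lemma fracInt_lower (n : ℕ) (α : ℝ) (hα : 0 < α) (hαn : α < (n:ℝ)) (Ω : Eucl n → ℝ)
    (B L : ℝ) (hB0 : 0 ≤ B) (hL0 : 0 ≤ L) (hΩ : Measurable Ω) (hhom : Homog n Ω)
    (hB : ∀ u ∈ sphere (0 : Eucl n) 1, |Ω u| ≤ B)
    (hL : ∀ u ∈ sphere (0 : Eucl n) 1, ∀ v ∈ sphere (0 : Eucl n) 1,
      |Ω u - Ω v| ≤ L * ‖u - v‖)
    {δ ε : ℝ} (hδ0 : 0 < δ) (hδ : δ ≤ 1/2) (hε : 0 < ε) {x : Eucl n}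
    (hx : ε / δ ≤ ‖x‖) :
    (volume (ball (0 : Eucl n) ε)).toReal *
        ((|Ω x| - 2 ^ (n+2) * (L + B * (n:ℝ)) * δ) * ‖x‖ ^ (α - (n:ℝ)))
      ≤ |fracInt n α Ω ((ball (0 : Eucl n) ε).indicator fun _ => (1:ℝ)) x| := by
  have ht : (0:ℝ) < ‖x‖ := lt_of_lt_of_le (div_pos hε hδ0) hx
  have hx0 : x ≠ 0 := norm_pos_iff.1 ht
  have hεδ : ε ≤ δ * ‖x‖ := by
    rw [div_le_iff₀ hδ0] at hx; nlinarith
  set k : Eucl n → ℝ := fun z => Ω z * ‖z‖ ^ (α - (n:ℝ)) with hk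
  have hk_meas : Measurable k := hΩ.mul (measurable_norm.pow_const _)
  have hkernel : ∀ z : Eucl n, Ω z / ‖z‖ ^ ((n:ℝ) - α) = k z := by
    intro z
    simp only [hk]
    rw [div_eq_mul_inv, ← Real.rpow_neg (norm_nonneg z), neg_sub]
  have hfr : fracInt n α Ω ((ball (0 : Eucl n) ε).indicator fun _ => (1:ℝ)) x
      = ∫ y in ball (0 : Eucl n) ε, k (x - y) := by
    rw [fracInt, ← integral_indicator measurableSet_ball]
    congr 1
    funext y
    by_cases hy : y ∈ ball (0 : Eucl n) ε
    · rw [indicator_of_mem hy, indicator_of_mem hy, hkernel, mul_one]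
    · rw [indicator_of_notMem hy, indicator_of_notMem hy, mul_zero]
  set Vr := (volume (ball (0 : Eucl n) ε)).toReal with hVr
  have hVr0 : 0 ≤ Vr := ENNReal.toReal_nonneg
  set Kδ : ℝ := 2 ^ (n+2) * (L + B * (n:ℝ)) * δ with hKδ
  have hKδ0 : 0 ≤ Kδ := by
    rw [hKδ]; positivity
  have tβpos : (0:ℝ) < ‖x‖ ^ (α - (n:ℝ)) := Real.rpow_pos_of_pos ht _
  have hball_bound : ∀ y ∈ ball (0 : Eucl n) ε,
      |k (x - y) - k x| ≤ Kδ * ‖x‖ ^ (α - (n:ℝ)) := by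
    intro y hy
    have hyx : ‖y‖ ≤ δ * ‖x‖ := le_trans (le_of_lt (mem_ball_zero_iff.1 hy)) hεδ
    exact ker_est n α hα hαn Ω B L hB0 hL0 hhom hB hL hδ0 hδ hx0 hyx
  have hint1 : IntegrableOn (fun y => k (x - y)) (ball (0 : Eucl n) ε) volume := by
    apply Integrable.mono' (g := fun _ => Kδ * ‖x‖ ^ (α - (n:ℝ)) + |k x|)
    · exact integrableOn_const measure_ball_lt_top.ne
    · exact (hk_meas.comp (measurable_const.sub measurable_id)).aestronglyMeasurable
    · refine (ae_restrict_iff' measurableSet_ball).2 (ae_of_all _ fun y hy => ?_)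
      have h1 := hball_bound y hy
      rw [Real.norm_eq_abs]
      have h2 : |k (x - y)| - |k x| ≤ |k (x - y) - k x| := abs_sub_abs_le_abs_sub _ _
      linarith
  have hconst : IntegrableOn (fun _ : Eucl n => k x) (ball (0 : Eucl n) ε) volume :=
    integrableOn_const measure_ball_lt_top.ne
  have hsplit : (∫ y in ball (0 : Eucl n) ε, k (x - y)) - Vr * k x
      = ∫ y in ball (0 : Eucl n) ε, (k (x - y) - k x) := by
    rw [integral_sub hint1 hconst, setIntegral_const, smul_eq_mul, measureReal_def, hVr]
  have herr : |∫ y in ball (0 : Eucl n) ε, (k (x - y) - k x)|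
      ≤ Kδ * ‖x‖ ^ (α - (n:ℝ)) * Vr := by
    have h := norm_setIntegral_le_of_norm_le_const_ae' (μ := volume)
      (s := ball (0 : Eucl n) ε) (f := fun y => k (x - y) - k x)
      measure_ball_lt_top
      (ae_of_all _ fun y hy => by
        rw [Real.norm_eq_abs]; exact hball_bound y hy)
    rw [Real.norm_eq_abs] at h
    exact h
  rw [hfr]
  have habs : |Vr * k x| = Vr * (|Ω x| * ‖x‖ ^ (α - (n:ℝ))) := by
    rw [abs_mul, abs_of_nonneg hVr0]
    simp only [hk]
    rw [abs_mul, abs_of_pos tβpos]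
  have htri : |Vr * k x| - |(∫ y in ball (0 : Eucl n) ε, k (x - y)) - Vr * k x|
      ≤ |∫ y in ball (0 : Eucl n) ε, k (x - y)| := by
    have := abs_sub_abs_le_abs_sub (Vr * k x) (∫ y in ball (0 : Eucl n) ε, k (x - y))
    rw [abs_sub_comm] at this
    linarith
  rw [hsplit] at htri
  rw [habs] at htri
  nlinarith [herr, htri]

end Aux

theorem stmt10 (n : ℕ) (α : ℝ) (hα : 0 < α) (hαn : α < n) :
    ∃ C : ℝ≥0∞, 0 < C ∧ C < ⊤ ∧
      ∀ (Ω : Eucl n → ℝ) (A : ℝ≥0∞) (B L : ℝ), Measurable Ω → Homog n Ω →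
        (∀ u ∈ sphere (0 : Eucl n) 1, |Ω u| ≤ B) →
        (∀ u ∈ sphere (0 : Eucl n) 1, ∀ v ∈ sphere (0 : Eucl n) 1,
          |Ω u - Ω v| ≤ L * ‖u - v‖) →
        (∀ f : Eucl n → ℝ, Integrable f →
          wnormSet volume ((n:ℝ)/((n:ℝ)-α)) Set.univ
              (fun x => (‖fracInt n α Ω f x‖₊ : ℝ≥0∞)) ≤ A * eLpNorm f 1 volume) →
        sphereLpNorm n ((n:ℝ)/((n:ℝ)-α)) Ω ≤ C * A := by
  have hn : 0 < n := by exact_mod_cast hα.trans hαn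
  set q : ℝ := (n:ℝ)/((n:ℝ)-α) with hq_def
  have hna : (0:ℝ) < (n:ℝ) - α := sub_pos.2 hαn
  have hq0 : 0 < q := div_pos (by exact_mod_cast hn) hna
  refine ⟨(n : ℝ≥0∞) ^ (1/q), ?_, ?_, ?_⟩
  · exact ENNReal.rpow_pos (by exact_mod_cast hn) (ENNReal.natCast_ne_top n)
  · exact ENNReal.rpow_lt_top_of_nonneg (by positivity) (ENNReal.natCast_ne_top n)
  intro Ω A B L hΩ hhom hB hL hbound
  -- basic positivity facts
  obtain ⟨i0⟩ : Nonempty (Fin n) := ⟨⟨0, hn⟩⟩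
  set u0 : Eucl n := EuclideanSpace.single i0 (1:ℝ) with hu0_def
  have hu0 : u0 ∈ sphere (0 : Eucl n) 1 := by
    rw [mem_sphere_zero_iff_norm, hu0_def, EuclideanSpace.norm_single]
    norm_num
  have hu0' : -u0 ∈ sphere (0 : Eucl n) 1 := by
    rw [mem_sphere_zero_iff_norm, norm_neg]
    rw [mem_sphere_zero_iff_norm] at hu0
    exact hu0
  have hB0 : 0 ≤ B := le_trans (abs_nonneg _) (hB u0 hu0)
  have hL0 : 0 ≤ L := by
    have h1 := hL u0 hu0 (-u0) hu0'
    have h2 : ‖u0 - -u0‖ = 2 := by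
      rw [sub_neg_eq_add, ← two_smul ℝ u0, norm_smul]
      rw [mem_sphere_zero_iff_norm] at hu0
      rw [hu0]
      norm_num
    rw [h2] at h1
    nlinarith [abs_nonneg (Ω u0 - Ω (-u0))]
  set K : ℝ := 2 ^ (n+2) * (L + B * (n:ℝ)) with hK_def
  have hK0 : 0 ≤ K := by rw [hK_def]; positivity
  haveI : Nontrivial (Eucl n) := by
    refine ⟨u0, 0, fun h => ?_⟩
    rw [mem_sphere_zero_iff_norm] at hu0
    rw [h] at hu0
    simp at hu0
  -- step 1 : for every admissible δ, the truncated integral is at most n * A^q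
  have key : ∀ δ : ℝ, 0 < δ → δ ≤ 1/2 →
      (∫⁻ θ : sphere (0 : Eucl n) 1,
        ENNReal.ofReal (max (|Ω (θ : Eucl n)| - K * δ) 0 ^ q)
        ∂((volume : Measure (Eucl n)).toSphere)) ≤ (n : ℝ≥0∞) * A ^ q := by
    intro δ hδ0 hδ
    set J : ℝ≥0∞ := ∫⁻ θ : sphere (0 : Eucl n) 1,
        ENNReal.ofReal (max (|Ω (θ : Eucl n)| - K * δ) 0 ^ q)
        ∂((volume : Measure (Eucl n)).toSphere) with hJ_def
    -- for every r > 0 : J / n ≤ A^q + volume (ball 0 r)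
    have step : ∀ r : ℝ, 0 < r → J / (n : ℝ≥0∞) ≤ A ^ q + volume (ball (0 : Eucl n) r) := by
      intro r hr
      set ε : ℝ := r * δ with hε_def
      have hε : 0 < ε := mul_pos hr hδ0
      have hεδ : ε / δ = r := by rw [hε_def]; field_simp
      set f : Eucl n → ℝ := (ball (0 : Eucl n) ε).indicator fun _ => (1:ℝ) with hf_def
      have hf_int : Integrable f :=
        (integrableOn_const (C := (1:ℝ)) (measure_ball_lt_top :
          volume (ball (0 : Eucl n) ε) < ⊤).ne).integrable_indicator measurableSet_ball
      have hw := hbound f hf_int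
      have help : eLpNorm f 1 volume = volume (ball (0 : Eucl n) ε) := by
        rw [hf_def, eLpNorm_indicator_const measurableSet_ball one_ne_zero ENNReal.one_ne_top]
        simp
      set V : ℝ≥0∞ := volume (ball (0 : Eucl n) ε) with hV_def
      have hV0 : V ≠ 0 := (measure_ball_pos volume 0 hε).ne'
      have hVtop : V ≠ ⊤ := measure_ball_lt_top.ne
      have hVrpos : 0 < V.toReal := ENNReal.toReal_pos hV0 hVtop
      -- the good set
      set S : Set (Eucl n) := {x | ε / δ ≤ ‖x‖ ∧ 1 < (|Ω x| - K * δ) * ‖x‖ ^ (α - (n:ℝ))}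
        with hS_def
      have hsub : S ⊆ {x | x ∈ Set.univ ∧
          ((V.toNNReal : ℝ≥0∞) < (‖fracInt n α Ω f x‖₊ : ℝ≥0∞))} := by
        intro x hx
        obtain ⟨hx1, hx2⟩ := hx
        refine ⟨mem_univ x, ?_⟩
        have hlow := fracInt_lower n α hα hαn Ω B L hB0 hL0 hΩ hhom hB hL hδ0 hδ hε hx1
        have hVlt : V.toReal < |fracInt n α Ω f x| := by
          calc V.toReal = V.toReal * 1 := by ring
            _ < V.toReal * ((|Ω x| - K * δ) * ‖x‖ ^ (α - (n:ℝ))) :=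
                mul_lt_mul_of_pos_left hx2 hVrpos
            _ ≤ |fracInt n α Ω f x| := hlow
        rw [ENNReal.coe_toNNReal hVtop, ← enorm_eq_nnnorm, Real.enorm_eq_ofReal_abs,
          ← ENNReal.ofReal_toReal hVtop]
        exact (ENNReal.ofReal_lt_ofReal_iff (lt_trans hVrpos hVlt)).2 hVlt
      -- weak bound gives μ S ≤ A^q
      have hwS : volume S ≤ A ^ q := by
        have h1 : V * (volume S) ^ (1/q) ≤ A * V := by
          calc V * (volume S) ^ (1/q)
              = (V.toNNReal : ℝ≥0∞) * (volume S) ^ (1/q) := by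
                rw [ENNReal.coe_toNNReal hVtop]
            _ ≤ (V.toNNReal : ℝ≥0∞) * (volume {x | x ∈ Set.univ ∧
                  ((V.toNNReal : ℝ≥0∞) < (‖fracInt n α Ω f x‖₊ : ℝ≥0∞))}) ^ (1/q) :=
                mul_le_mul_right
                  (ENNReal.rpow_le_rpow (measure_mono hsub) (by positivity)) _
            _ ≤ wnormSet volume q Set.univ (fun x => (‖fracInt n α Ω f x‖₊ : ℝ≥0∞)) :=
                le_iSup (fun l : NNReal => (l : ℝ≥0∞) * (volume {x | x ∈ Set.univ ∧
                  ((l : ℝ≥0∞) < (‖fracInt n α Ω f x‖₊ : ℝ≥0∞))}) ^ (1/q)) V.toNNReal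
            _ ≤ A * eLpNorm f 1 volume := hw
            _ = A * V := by rw [help]
        have h2 : (volume S) ^ (1/q) ≤ A := by
          rw [mul_comm A V] at h1
          exact (ENNReal.mul_le_mul_iff_right hV0 hVtop).1 h1
        calc volume S = ((volume S) ^ (1/q)) ^ q := by
              rw [← ENNReal.rpow_mul, one_div, inv_mul_cancel₀ hq0.ne', ENNReal.rpow_one]
          _ ≤ A ^ q := ENNReal.rpow_le_rpow h2 hq0.le
      -- lower bound on μ S by polar coordinates
      have hpol := measure_polar n α hα hαn Ω hΩ hhom (K * δ)
      have hlowS : J / (n : ℝ≥0∞) - volume (ball (0 : Eucl n) (ε/δ)) ≤ volume S := by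
        have hsub2 : {x : Eucl n | x ≠ 0 ∧ 1 < (|Ω x| - K * δ) * ‖x‖ ^ (α - (n:ℝ))} \
            ball (0 : Eucl n) (ε/δ) ⊆ S := by
          intro x hx
          obtain ⟨⟨hx1, hx2⟩, hx3⟩ := hx
          refine ⟨?_, hx2⟩
          rw [mem_ball_zero_iff, not_lt] at hx3
          exact hx3
        calc J / (n : ℝ≥0∞) - volume (ball (0 : Eucl n) (ε/δ))
            = volume {x : Eucl n | x ≠ 0 ∧ 1 < (|Ω x| - K * δ) * ‖x‖ ^ (α - (n:ℝ))} -
              volume (ball (0 : Eucl n) (ε/δ)) := by rw [hpol, hJ_def]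
          _ ≤ volume ({x : Eucl n | x ≠ 0 ∧ 1 < (|Ω x| - K * δ) * ‖x‖ ^ (α - (n:ℝ))} \
              ball (0 : Eucl n) (ε/δ)) := le_measure_diff
          _ ≤ volume S := measure_mono hsub2
      rw [hεδ] at hlowS
      have := hlowS.trans hwS
      rwa [tsub_le_iff_right] at this
    -- let r → 0
    have hVlim : Tendsto (fun r : ℝ => A ^ q + volume (ball (0 : Eucl n) r))
        (nhdsWithin 0 (Ioi 0)) (nhds (A ^ q)) := by
      have h1 : Tendsto (fun r : ℝ => volume (ball (0 : Eucl n) r))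
          (nhdsWithin 0 (Ioi 0)) (nhds 0) := by
        have hball : ∀ r : ℝ, 0 < r → volume (ball (0 : Eucl n) r) =
            ENNReal.ofReal (r ^ n) * volume (ball (0 : Eucl n) 1) := by
          intro r hr
          rw [Measure.addHaar_ball volume 0 hr.le, finrank_euclideanSpace_fin]
        have h2 : Tendsto (fun r : ℝ => ENNReal.ofReal (r ^ n) * volume (ball (0 : Eucl n) 1))
            (nhdsWithin 0 (Ioi 0)) (nhds 0) := by
          have h3 : Tendsto (fun r : ℝ => ENNReal.ofReal (r ^ n))
              (nhdsWithin 0 (Ioi 0)) (nhds 0) := by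
            have h4 : Tendsto (fun r : ℝ => r ^ n) (nhdsWithin 0 (Ioi 0)) (nhds 0) := by
              have := ((continuous_pow n).tendsto (0:ℝ)).mono_left
                (nhdsWithin_le_nhds (s := Ioi (0:ℝ)))
              rwa [zero_pow hn.ne'] at this
            have := (ENNReal.continuous_ofReal.tendsto 0).comp h4
            rwa [ENNReal.ofReal_zero] at this
          have := ENNReal.Tendsto.mul_const h3
            (Or.inr (measure_ball_lt_top :
              volume (ball (0 : Eucl n) 1) < ⊤).ne)
          rwa [zero_mul] at this
        refine h2.congr' ?_
        filter_upwards [self_mem_nhdsWithin] with r hr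
        rw [hball r hr]
      have := Tendsto.const_add (A ^ q) h1
      rwa [add_zero] at this
    have hdiv : J / (n : ℝ≥0∞) ≤ A ^ q := by
      refine ge_of_tendsto hVlim ?_
      filter_upwards [self_mem_nhdsWithin] with r hr
      exact step r hr
    have hn0 : (n : ℝ≥0∞) ≠ 0 := by exact_mod_cast hn.ne'
    have hntop : (n : ℝ≥0∞) ≠ ⊤ := ENNReal.natCast_ne_top n
    rw [ENNReal.div_le_iff_le_mul (Or.inl hn0) (Or.inl hntop)] at hdiv
    rwa [mul_comm] at hdiv
  -- step 2 : monotone convergence in δ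
  set σ : Measure (sphere (0 : Eucl n) 1) := (volume : Measure (Eucl n)).toSphere with hσ_def
  set g : ℕ → sphere (0 : Eucl n) 1 → ℝ≥0∞ := fun m θ =>
    ENNReal.ofReal (max (|Ω (θ : Eucl n)| - K * ((1/2 : ℝ) * (1/((m:ℝ)+1)))) 0 ^ q) with hg_def
  have hδk0 : ∀ m : ℕ, (0:ℝ) < (1/2 : ℝ) * (1/((m:ℝ)+1)) := by
    intro m; positivity
  have hδk : ∀ m : ℕ, (1/2 : ℝ) * (1/((m:ℝ)+1)) ≤ 1/2 := by
    intro m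
    have h1 : (1:ℝ)/((m:ℝ)+1) ≤ 1 := by
      rw [div_le_one (by positivity)]
      simp
    nlinarith
  have hg_meas : ∀ m : ℕ, Measurable (g m) := by
    intro m
    apply ENNReal.measurable_ofReal.comp
    exact ((((hΩ.comp measurable_subtype_coe).abs.sub measurable_const).max
      measurable_const).pow_const q)
  have hg_mono : Monotone g := by
    intro i j hij θ
    apply ENNReal.ofReal_le_ofReal
    apply Real.rpow_le_rpow (le_max_right _ _) _ hq0.le
    apply max_le_max _ le_rfl
    apply sub_le_sub_left
    apply mul_le_mul_of_nonneg_left _ hK0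
    apply mul_le_mul_of_nonneg_left _ (by norm_num : (0:ℝ) ≤ 1/2)
    apply div_le_div_of_nonneg_left (by norm_num) (by positivity)
    have : (i:ℝ) ≤ (j:ℝ) := by exact_mod_cast hij
    linarith
  have hg_sup : ∀ θ : sphere (0 : Eucl n) 1,
      (⨆ m, g m θ) = ENNReal.ofReal (|Ω (θ : Eucl n)| ^ q) := by
    intro θ
    have hδtend : Tendsto (fun m : ℕ => (1/2 : ℝ) * (1/((m:ℝ)+1))) atTop (nhds 0) := by
      have := tendsto_one_div_add_atTop_nhds_zero_nat.const_mul (1/2 : ℝ)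
      rwa [mul_zero] at this
    have htend : Tendsto (fun m => g m θ) atTop
        (nhds (ENNReal.ofReal (|Ω (θ : Eucl n)| ^ q))) := by
      have h1 : Tendsto (fun m : ℕ => max (|Ω (θ : Eucl n)| - K * ((1/2 : ℝ) * (1/((m:ℝ)+1)))) 0)
          atTop (nhds (|Ω (θ : Eucl n)|)) := by
        have h2 : Tendsto (fun m : ℕ => |Ω (θ : Eucl n)| - K * ((1/2 : ℝ) * (1/((m:ℝ)+1))))
            atTop (nhds (|Ω (θ : Eucl n)|)) := by
          have h3 := (hδtend.const_mul K).const_sub (|Ω (θ : Eucl n)|)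
          rwa [mul_zero, sub_zero] at h3
        have h4 := h2.max (tendsto_const_nhds (x := (0:ℝ)))
        rwa [max_eq_left (abs_nonneg _)] at h4
      have h5 : ContinuousAt (fun z : ℝ => z ^ q) (|Ω (θ : Eucl n)|) :=
        Real.continuousAt_rpow_const _ _ (Or.inr hq0.le)
      have h6 := (h5.tendsto.comp h1)
      exact (ENNReal.continuous_ofReal.tendsto _).comp h6
    exact tendsto_nhds_unique (tendsto_atTop_iSup (fun i j hij => hg_mono hij θ)) htend
  have hfin : sphereLpPow n q Ω ≤ (n : ℝ≥0∞) * A ^ q := by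
    have heq : sphereLpPow n q Ω = ∫⁻ θ, (⨆ m, g m θ) ∂σ := by
      rw [sphereLpPow]
      refine lintegral_congr fun θ => ?_
      rw [hg_sup θ, ← enorm_eq_nnnorm, Real.enorm_eq_ofReal_abs,
        ENNReal.ofReal_rpow_of_nonneg (abs_nonneg _) hq0.le]
    rw [heq, lintegral_iSup hg_meas hg_mono]
    refine iSup_le fun m => ?_
    exact key _ (hδk0 m) (hδk m)
  -- step 3 : conclude
  rw [sphereLpNorm]
  calc (sphereLpPow n q Ω) ^ (1/q) ≤ ((n : ℝ≥0∞) * A ^ q) ^ (1/q) :=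
        ENNReal.rpow_le_rpow hfin (by positivity)
    _ = (n : ℝ≥0∞) ^ (1/q) * A := by
        rw [ENNReal.mul_rpow_of_nonneg _ _ (by positivity : (0:ℝ) ≤ 1/q),
          ← ENNReal.rpow_mul, mul_one_div, div_self hq0.ne', ENNReal.rpow_one]
end
end

section
/- Let $0<\alpha<n$, $\rho>0$, and let $\Omega$ be homogeneous of degree zero, bounded and Lipschitz on $\mathbb{S}^{n-1}$. Let $f\in L^1(\mathbb{R}^n)$ be nonnegative, supported in $B(0,1)$, with $\|f\|_{L^1}=1$, and set $f_t(y)=t^{-n}f(y/t)$. Then for every $x$ with $|x|\ge\rho$ and every $0<t<\rho/2$: $\frac{1-\beta_t}{|x|^{n-\alpha}}\int_{B(0,t)}|\Omega(x-y)|f_t(y)\,dy \le M_{\Omega}^{\alpha}f_t(x) \le \frac{1+\beta_t}{|x|^{n-\alpha}}\int_{B(0,t)}|\Omega(x-y)|f_t(y)\,dy$, where $\beta_t=\rho^{n-\alpha}\big((\rho-t)^{\alpha-n}-(\rho+t)^{\alpha-n}\big)\to 0$ as $t\to0^+$. -/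
open MeasureTheory Metric Set ENNReal Filter

noncomputable section

theorem stmt13 (n : ℕ) (α : ℝ) (hα : 0 < α) (hαn : α < n) (ρ : ℝ) (hρ : 0 < ρ)
    (Ω : Eucl n → ℝ) (B L : ℝ) (hmeas : Measurable Ω) (hhom : Homog n Ω)
    (hB : ∀ u ∈ sphere (0 : Eucl n) 1, |Ω u| ≤ B)
    (hL : ∀ u ∈ sphere (0 : Eucl n) 1, ∀ v ∈ sphere (0 : Eucl n) 1,
      |Ω u - Ω v| ≤ L * ‖u - v‖)
    (f : Eucl n → ℝ) (hf : Integrable f) (hpos : ∀ y, 0 ≤ f y)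
    (hsupp : Function.support f ⊆ closedBall (0 : Eucl n) 1)
    (hnorm : (∫ y, f y) = 1)
    (β : ℝ → ℝ)
    (hβ : β = fun t => ρ ^ ((n:ℝ) - α) * ((ρ - t) ^ (α - (n:ℝ)) - (ρ + t) ^ (α - (n:ℝ)))) :
    Tendsto β (nhdsWithin 0 (Ioi 0)) (nhds 0) ∧
    ∀ t : ℝ, 0 < t → t < ρ / 2 → ∀ x : Eucl n, ρ ≤ ‖x‖ →
      (ENNReal.ofReal ((1 - β t) * ‖x‖ ^ (α - (n:ℝ))) *
          (∫⁻ y in ball (0 : Eucl n) t, (‖Ω (x - y)‖₊ * ‖dil n t f y‖₊ : ℝ≥0∞))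
        ≤ fracMax n α Ω (dil n t f) x ∧
      fracMax n α Ω (dil n t f) x ≤
        ENNReal.ofReal ((1 + β t) * ‖x‖ ^ (α - (n:ℝ))) *
          (∫⁻ y in ball (0 : Eucl n) t, (‖Ω (x - y)‖₊ * ‖dil n t f y‖₊ : ℝ≥0∞))) := by
  
  have hn0 : (0:ℝ) < n := hα.trans hαn
  constructor
  · subst hβ
    have h1 : Tendsto (fun t : ℝ => (ρ - t) ^ (α - (n:ℝ))) (nhds 0) (nhds (ρ ^ (α - (n:ℝ)))) := by
      have hc : ContinuousAt (fun t : ℝ => (ρ - t) ^ (α - (n:ℝ))) 0 := by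
        apply ContinuousAt.rpow_const (by fun_prop)
        left; simp [hρ.ne']
      simpa using hc.tendsto
    have h2 : Tendsto (fun t : ℝ => (ρ + t) ^ (α - (n:ℝ))) (nhds 0) (nhds (ρ ^ (α - (n:ℝ)))) := by
      have hc : ContinuousAt (fun t : ℝ => (ρ + t) ^ (α - (n:ℝ))) 0 := by
        apply ContinuousAt.rpow_const (by fun_prop)
        left; simp [hρ.ne']
      simpa using hc.tendsto
    have h3 := (h1.sub h2).const_mul (ρ ^ ((n:ℝ) - α))
    have h4 := h3.mono_left (nhdsWithin_le_nhds (s := Ioi (0:ℝ)))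
    simpa using h4
  · intro t ht htρ x hx
    have hxpos : 0 < ‖x‖ := lt_of_lt_of_le hρ hx
    have htρ' : t < ρ := htρ.trans (by linarith)
    have hρt : 0 < ρ - t := by linarith
    have hxt : 0 < ‖x‖ - t := by linarith
    set e : ℝ := α - (n:ℝ) with he
    have hneg : e ≤ 0 := by simp [he]; linarith
    -- auxiliary: antitone rpow
    -- β facts
    have hβ1 : 1 ≤ ρ ^ ((n:ℝ) - α) * (ρ - t) ^ e := by
      have h1 : ρ ^ e ≤ (ρ - t) ^ e :=
        Real.rpow_le_rpow_of_nonpos hρt (by linarith) hneg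
      have h2 : 0 < ρ ^ ((n:ℝ) - α) := Real.rpow_pos_of_pos hρ _
      have h3 : ρ ^ ((n:ℝ) - α) * ρ ^ e = 1 := by
        rw [← Real.rpow_add hρ]; simp [he]
      calc (1:ℝ) = ρ ^ ((n:ℝ) - α) * ρ ^ e := h3.symm
        _ ≤ _ := by nlinarith
    have hβ2 : ρ ^ ((n:ℝ) - α) * (ρ + t) ^ e ≤ 1 := by
      have h1 : (ρ + t) ^ e ≤ ρ ^ e :=
        Real.rpow_le_rpow_of_nonpos hρ (by linarith) hneg
      have h2 : 0 < ρ ^ ((n:ℝ) - α) := Real.rpow_pos_of_pos hρ _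
      have h3 : ρ ^ ((n:ℝ) - α) * ρ ^ e = 1 := by
        rw [← Real.rpow_add hρ]; simp [he]
      nlinarith
    -- main real inequalities
    have hlow : (1 - β t) * ‖x‖ ^ e ≤ (‖x‖ + t) ^ e := by
      have hb : 1 - β t ≤ ρ ^ ((n:ℝ) - α) * (ρ + t) ^ e := by
        rw [hβ]; simp only; nlinarith
      have hx2 : 0 ≤ ‖x‖ ^ e := (Real.rpow_pos_of_pos hxpos _).le
      have key : ρ ^ ((n:ℝ) - α) * (ρ + t) ^ e * ‖x‖ ^ e ≤ (‖x‖ + t) ^ e := by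
        have hmul : ((ρ + t) * ‖x‖) ^ e ≤ (ρ * (‖x‖ + t)) ^ e := by
          apply Real.rpow_le_rpow_of_nonpos (by positivity) (by nlinarith) hneg
        rw [Real.mul_rpow (by positivity) (by positivity),
          Real.mul_rpow (by positivity) (by positivity)] at hmul
        have h2 : 0 < ρ ^ ((n:ℝ) - α) := Real.rpow_pos_of_pos hρ _
        have h3 : ρ ^ ((n:ℝ) - α) * ρ ^ e = 1 := by
          rw [← Real.rpow_add hρ]; simp [he]
        calc ρ ^ ((n:ℝ) - α) * (ρ + t) ^ e * ‖x‖ ^ e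
            ≤ ρ ^ ((n:ℝ) - α) * (ρ ^ e * (‖x‖ + t) ^ e) := by nlinarith
          _ = (‖x‖ + t) ^ e := by rw [← mul_assoc, h3, one_mul]
      calc (1 - β t) * ‖x‖ ^ e ≤ ρ ^ ((n:ℝ) - α) * (ρ + t) ^ e * ‖x‖ ^ e :=
            mul_le_mul_of_nonneg_right hb hx2
        _ ≤ _ := key
    have hup : (‖x‖ - t) ^ e ≤ (1 + β t) * ‖x‖ ^ e := by
      have hb : ρ ^ ((n:ℝ) - α) * (ρ - t) ^ e ≤ 1 + β t := by
        rw [hβ]; simp only; nlinarith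
      have hx2 : 0 ≤ ‖x‖ ^ e := (Real.rpow_pos_of_pos hxpos _).le
      have key : (‖x‖ - t) ^ e ≤ ρ ^ ((n:ℝ) - α) * (ρ - t) ^ e * ‖x‖ ^ e := by
        have hmul : (ρ * (‖x‖ - t)) ^ e ≤ ((ρ - t) * ‖x‖) ^ e := by
          apply Real.rpow_le_rpow_of_nonpos (by positivity) (by nlinarith) hneg
        rw [Real.mul_rpow (by positivity) (by positivity),
          Real.mul_rpow (by positivity) (by positivity)] at hmul
        have h2 : 0 < ρ ^ ((n:ℝ) - α) := Real.rpow_pos_of_pos hρ _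
        have h3 : ρ ^ ((n:ℝ) - α) * ρ ^ e = 1 := by
          rw [← Real.rpow_add hρ]; simp [he]
        calc (‖x‖ - t) ^ e = ρ ^ ((n:ℝ) - α) * (ρ ^ e * (‖x‖ - t) ^ e) := by
              rw [← mul_assoc, h3, one_mul]
          _ ≤ ρ ^ ((n:ℝ) - α) * ((ρ - t) ^ e * ‖x‖ ^ e) := by nlinarith
          _ = _ := by ring
      exact key.trans (mul_le_mul_of_nonneg_right hb hx2)
    -- the integrand
    set g : Eucl n → ℝ≥0∞ := fun y => (‖Ω (x - y)‖₊ * ‖dil n t f y‖₊ : ℝ≥0∞) with hg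
    -- g vanishes outside closedBall 0 t
    have hzero : ∀ y : Eucl n, t < ‖y‖ → g y = 0 := by
      intro y hy
      have h1 : dil n t f y = 0 := by
        have : f (t⁻¹ • y) = 0 := by
          by_contra hne
          have hmem := hsupp (Function.mem_support.2 hne)
          rw [mem_closedBall, dist_zero_right, norm_smul, norm_inv,
            Real.norm_eq_abs, abs_of_pos ht] at hmem
          have : ‖y‖ ≤ t := by
            rw [inv_mul_le_iff₀ ht] at hmem; linarith [hmem]
          linarith
        simp [dil, this]
      simp [hg, h1]
    -- integral over any set ≤ integral over ball 0 t
    have hsph : (volume : Measure (Eucl n)) (sphere (0 : Eucl n) t) = 0 :=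
      Measure.addHaar_sphere_of_ne_zero (μ := volume) (0 : Eucl n) ht.ne'
    have hae : g =ᵐ[(volume : Measure (Eucl n))] (ball (0 : Eucl n) t).indicator g := by
      have hsph' : ∀ᵐ y ∂(volume : Measure (Eucl n)), y ∉ sphere (0 : Eucl n) t := by
        rw [ae_iff]
        refine measure_mono_null (fun y hy => ?_) hsph
        simpa using hy
      filter_upwards [hsph'] with y hy
      by_cases hmem : y ∈ ball (0 : Eucl n) t
      · rw [Set.indicator_of_mem hmem]
      · rw [Set.indicator_of_notMem hmem]
        apply hzero
        rw [mem_ball, dist_zero_right, not_lt] at hmem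
        rcases lt_or_eq_of_le hmem with h | h
        · exact h
        · exact absurd (by simpa [mem_sphere_iff_norm] using h.symm) hy
    have hdom : ∀ r : ℝ, (∫⁻ y in ball x r, g y) ≤ ∫⁻ y in ball (0 : Eucl n) t, g y := by
      intro r
      calc (∫⁻ y in ball x r, g y) ≤ ∫⁻ y, g y := setLIntegral_le_lintegral _ _
        _ = ∫⁻ y, (ball (0 : Eucl n) t).indicator g y := lintegral_congr_ae hae
        _ = ∫⁻ y in ball (0 : Eucl n) t, g y := lintegral_indicator measurableSet_ball g
    constructor
    · -- lower bound
      have hr0 : (0:ℝ) < ‖x‖ + t := by linarith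
      have hss : ball (0 : Eucl n) t ⊆ ball x (‖x‖ + t) := by
        intro y hy
        rw [mem_ball, dist_zero_right] at hy
        rw [mem_ball, dist_eq_norm]
        calc ‖y - x‖ ≤ ‖y‖ + ‖x‖ := norm_sub_le _ _
          _ < ‖x‖ + t := by linarith
      calc ENNReal.ofReal ((1 - β t) * ‖x‖ ^ e) * (∫⁻ y in ball (0 : Eucl n) t, g y)
          ≤ ENNReal.ofReal ((‖x‖ + t) ^ e) * (∫⁻ y in ball x (‖x‖ + t), g y) :=
            mul_le_mul' (ENNReal.ofReal_le_ofReal hlow) (lintegral_mono_set hss)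
        _ ≤ fracMax n α Ω (dil n t f) x := by
            rw [fracMax]
            exact le_iSup₂ (f := fun (r : ℝ) (_ : 0 < r) => ENNReal.ofReal (r ^ (α - (n:ℝ))) *
              ∫⁻ y in ball x r, (‖Ω (x - y)‖₊ * ‖dil n t f y‖₊ : ℝ≥0∞)) (‖x‖ + t) hr0
    · -- upper bound
      rw [fracMax]
      refine iSup₂_le fun r hr => ?_
      by_cases hcase : r ≤ ‖x‖ - t
      · have hz : (∫⁻ y in ball x r, g y) = 0 := by
          rw [setLIntegral_congr_fun measurableSet_ball (fun y hy => ?_),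
            lintegral_zero]
          apply hzero
          rw [mem_ball, dist_eq_norm] at hy
          have h2 : ‖x‖ - ‖y‖ ≤ ‖x - y‖ := norm_sub_norm_le x y
          rw [norm_sub_rev] at h2
          linarith
        rw [show (∫⁻ y in ball x r, (‖Ω (x - y)‖₊ * ‖dil n t f y‖₊ : ℝ≥0∞)) =
          ∫⁻ y in ball x r, g y from rfl, hz, mul_zero]
        exact zero_le
      · push_neg at hcase
        have h1 : ENNReal.ofReal (r ^ e) ≤ ENNReal.ofReal ((1 + β t) * ‖x‖ ^ e) := by
          apply ENNReal.ofReal_le_ofReal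
          refine le_trans ?_ hup
          exact Real.rpow_le_rpow_of_nonpos hxt hcase.le hneg
        exact mul_le_mul' h1 (hdom r)
end
end
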